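/- arXiv:2603.14955 — 2 statements merged into one kernel-verified Lean document; each statement's English description precedes it below -/
import Mathlib

section
/- Let ⟨[0,1], ⊕_p⟩ be a convex algebra satisfying (MO), (UC) and (LC), and let (a,b) ∈ Δ^⊕. Then there exists a unique τ ∈ {1, ∞} such that the interval [a,b) is closed under the operations ⊕_p and ⟨[a,b), ⊕_p⟩ is isomorphic to ⟨[0,τ), +_p⟩, where x +_p y = px + (1−p)y; i.e. there is a bijection Φ : [0,τ) → [a,b) with Φ(s +_p t) = Φ(s) ⊕_p Φ(t) for all s, t ∈ [0,τ) and p ∈ (0,1). Moreover, every such isomorphism is strictly increasing, and if τ = 1 the isomorphism is unique. -/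
open Set Filter Topology

/-- A convex algebra on the interval `[0,1] ⊆ ℝ`: `op p x y` denotes `x ⊕_p y`,
for `p ∈ (0,1)`, extended to `p ∈ [0,1]` by the projection axioms
`x ⊕_1 y = x` and `x ⊕_0 y = y`.  All axioms are required only on `[0,1]`;
values of `op` outside `[0,1]` are irrelevant. -/
structure UCA where
  op : ℝ → ℝ → ℝ → ℝ
  mem : ∀ p ∈ Set.Icc (0:ℝ) 1, ∀ x ∈ Set.Icc (0:ℝ) 1, ∀ y ∈ Set.Icc (0:ℝ) 1,
      op p x y ∈ Set.Icc (0:ℝ) 1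
  idem : ∀ p ∈ Set.Ioo (0:ℝ) 1, ∀ x ∈ Set.Icc (0:ℝ) 1, op p x x = x
  comm : ∀ p ∈ Set.Ioo (0:ℝ) 1, ∀ x ∈ Set.Icc (0:ℝ) 1, ∀ y ∈ Set.Icc (0:ℝ) 1,
      op p x y = op (1 - p) y x
  assoc : ∀ p ∈ Set.Ioo (0:ℝ) 1, ∀ q ∈ Set.Ioo (0:ℝ) 1,
      ∀ x ∈ Set.Icc (0:ℝ) 1, ∀ y ∈ Set.Icc (0:ℝ) 1, ∀ z ∈ Set.Icc (0:ℝ) 1,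
      op q (op p x y) z = op (p * q) x (op ((1 - p) * q / (1 - p * q)) y z)
  proj1 : ∀ x ∈ Set.Icc (0:ℝ) 1, ∀ y ∈ Set.Icc (0:ℝ) 1, op 1 x y = x
  proj0 : ∀ x ∈ Set.Icc (0:ℝ) 1, ∀ y ∈ Set.Icc (0:ℝ) 1, op 0 x y = y

/-- Monotonicity (MO): `x ≤ x'` implies `x ⊕_p y ≤ x' ⊕_p y`. -/
def UCA.MO (A : UCA) : Prop :=
  ∀ x ∈ Set.Icc (0:ℝ) 1, ∀ x' ∈ Set.Icc (0:ℝ) 1, ∀ y ∈ Set.Icc (0:ℝ) 1,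
    ∀ p ∈ Set.Ioo (0:ℝ) 1, x ≤ x' → A.op p x y ≤ A.op p x' y

/-- (UC): for `x, y ∈ [0,1)` and `p ∈ (0,1)`,
`limsup_{ε→0⁺} ((x+ε) ⊕_p (y+ε)) ≤ x ⊕_p y`. -/
def UCA.UC (A : UCA) : Prop :=
  ∀ x ∈ Set.Ico (0:ℝ) 1, ∀ y ∈ Set.Ico (0:ℝ) 1, ∀ p ∈ Set.Ioo (0:ℝ) 1,
    Filter.limsup (fun ε => A.op p (x + ε) (y + ε)) (𝓝[>] (0:ℝ)) ≤ A.op p x y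

/-- (LC): for `x ≤ y` in `[0,1]`, `liminf_{p→1⁻} (y ⊕_p x) ≥ y`. -/
def UCA.LC (A : UCA) : Prop :=
  ∀ x ∈ Set.Icc (0:ℝ) 1, ∀ y ∈ Set.Icc (0:ℝ) 1, x ≤ y →
    y ≤ Filter.liminf (fun p => A.op p y x) (𝓝[<] (1:ℝ))

/-- `y ⊳ x` : `y` eats `x`, i.e. `y ⊕_t x = y` for all `t ∈ (0,1]`. -/
def UCA.Eats (A : UCA) (y x : ℝ) : Prop :=
  ∀ t ∈ Set.Ioc (0:ℝ) 1, A.op t y x = y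

/-- `E^⊕ = { y ∈ [0,1] : y ⊳ 0 }`. -/
def UCA.E (A : UCA) : Set ℝ := {y ∈ Set.Icc (0:ℝ) 1 | A.Eats y 0}

/-- `V_{x,y} = inf { y ⊕_p x : p ∈ (0,1] }`. -/
noncomputable def UCA.V (A : UCA) (x y : ℝ) : ℝ :=
  sInf ((fun p => A.op p y x) '' Set.Ioc (0:ℝ) 1)

/-- The interval `[0, τ)` for `τ ∈ {1, ∞}` (encoded in `ℝ≥0∞`):
`{t : ℝ | 0 ≤ t, t < τ}`. -/
def tauSet (τ : ENNReal) : Set ℝ := {t : ℝ | 0 ≤ t ∧ ENNReal.ofReal t < τ}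

/-- `Φ` is an isomorphism of `⟨[0,τ), +_p⟩` (operations induced by linear combinations)
onto `⟨[a,b), ⊕_p⟩`: a bijection of `[0,τ)` onto `[a,b)` with
`Φ(s +_p t) = Φ(s) ⊕_p Φ(t)`. -/
def UCA.IsTauIso (A : UCA) (a b : ℝ) (τ : ENNReal) (Φ : ℝ → ℝ) : Prop :=
  Set.BijOn Φ (tauSet τ) (Set.Ico a b) ∧
  ∀ p ∈ Set.Ioo (0:ℝ) 1, ∀ s ∈ tauSet τ, ∀ t ∈ tauSet τ,
    Φ (p * s + (1 - p) * t) = A.op p (Φ s) (Φ t)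

/-- `(a,b) ∈ Δ^⊕`: `a, b ∈ E^⊕`, `a < b`, and `(a,b) ∩ E^⊕ = ∅`. -/
def UCA.Delta (A : UCA) (a b : ℝ) : Prop :=
  a ∈ A.E ∧ b ∈ A.E ∧ a < b ∧ Set.Ioo a b ∩ A.E = ∅
section Basics

open Set Filter Topology

namespace UCA

variable (A : UCA)

lemma ioo_subset : Set.Ioo (0:ℝ) 1 ⊆ Set.Icc (0:ℝ) 1 := Set.Ioo_subset_Icc_self

lemma mem' {p x y : ℝ} (hp : p ∈ Set.Ioo (0:ℝ) 1) (hx : x ∈ Set.Icc (0:ℝ) 1)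
    (hy : y ∈ Set.Icc (0:ℝ) 1) : A.op p x y ∈ Set.Icc (0:ℝ) 1 :=
  A.mem p (Set.Ioo_subset_Icc_self hp) x hx y hy

lemma mono2 (hMO : A.MO) {p x y y' : ℝ} (hp : p ∈ Set.Ioo (0:ℝ) 1)
    (hx : x ∈ Set.Icc (0:ℝ) 1) (hy : y ∈ Set.Icc (0:ℝ) 1) (hy' : y' ∈ Set.Icc (0:ℝ) 1)
    (h : y ≤ y') : A.op p x y ≤ A.op p x y' := by
  have h1p : 1 - p ∈ Set.Ioo (0:ℝ) 1 := ⟨by linarith [hp.2], by linarith [hp.1]⟩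
  rw [A.comm p hp x hx y hy, A.comm p hp x hx y' hy']
  exact hMO y hy y' hy' x hx (1 - p) h1p h

lemma min_mem {x y : ℝ} (hx : x ∈ Set.Icc (0:ℝ) 1) (hy : y ∈ Set.Icc (0:ℝ) 1) :
    min x y ∈ Set.Icc (0:ℝ) 1 := ⟨le_min hx.1 hy.1, (min_le_left _ _).trans hx.2⟩

lemma max_mem {x y : ℝ} (hx : x ∈ Set.Icc (0:ℝ) 1) (hy : y ∈ Set.Icc (0:ℝ) 1) :
    max x y ∈ Set.Icc (0:ℝ) 1 := ⟨hx.1.trans (le_max_left _ _), max_le hx.2 hy.2⟩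

lemma min_le_op (hMO : A.MO) {p x y : ℝ} (hp : p ∈ Set.Ioo (0:ℝ) 1)
    (hx : x ∈ Set.Icc (0:ℝ) 1) (hy : y ∈ Set.Icc (0:ℝ) 1) : min x y ≤ A.op p x y := by
  have hm := min_mem hx hy
  calc min x y = A.op p (min x y) (min x y) := (A.idem p hp _ hm).symm
    _ ≤ A.op p x (min x y) := hMO _ hm x hx _ hm p hp (min_le_left _ _)
    _ ≤ A.op p x y := A.mono2 hMO hp hx hm hy (min_le_right _ _)

lemma op_le_max (hMO : A.MO) {p x y : ℝ} (hp : p ∈ Set.Ioo (0:ℝ) 1)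
    (hx : x ∈ Set.Icc (0:ℝ) 1) (hy : y ∈ Set.Icc (0:ℝ) 1) : A.op p x y ≤ max x y := by
  have hm := max_mem hx hy
  calc A.op p x y ≤ A.op p (max x y) y := hMO x hx _ hm y hy p hp (le_max_left _ _)
    _ ≤ A.op p (max x y) (max x y) := A.mono2 hMO hp hm hy hm (le_max_right _ _)
    _ = max x y := A.idem p hp _ hm

lemma collapse {α β x z : ℝ} (hα : α ∈ Set.Ioo (0:ℝ) 1) (hβ : β ∈ Set.Ioo (0:ℝ) 1)
    (hx : x ∈ Set.Icc (0:ℝ) 1) (hz : z ∈ Set.Icc (0:ℝ) 1) :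
    A.op α x (A.op β x z) = A.op (α + β * (1 - α)) x z := by
  set q := α + β * (1 - α) with hqdef
  have hq : q ∈ Set.Ioo (0:ℝ) 1 := by
    constructor
    · nlinarith [hα.1, hα.2, hβ.1, hβ.2]
    · nlinarith [hα.1, hα.2, hβ.1, hβ.2]
  have hq0 : q ≠ 0 := ne_of_gt hq.1
  have hαq : α < q := by nlinarith [hα.2, hβ.1]
  have hp : α / q ∈ Set.Ioo (0:ℝ) 1 := by
    constructor
    · exact div_pos hα.1 hq.1
    · rw [div_lt_one hq.1]; exact hαq
  have h := A.assoc (α / q) hp q hq x hx x hx z hz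
  rw [A.idem _ hp x hx] at h
  have e1 : α / q * q = α := div_mul_cancel₀ _ hq0
  rw [e1] at h
  have hα1 : (1:ℝ) - α ≠ 0 := by linarith [hα.2]
  have e2 : (1 - α / q) * q / (1 - α) = β := by
    have h3 : (1 - α / q) * q = q - α := by field_simp
    rw [h3, hqdef]
    field_simp
    ring
  rw [e2] at h
  exact h.symm

lemma rightscale {α β x z : ℝ} (hα : α ∈ Set.Ioo (0:ℝ) 1) (hβ : β ∈ Set.Ioo (0:ℝ) 1)
    (hx : x ∈ Set.Icc (0:ℝ) 1) (hz : z ∈ Set.Icc (0:ℝ) 1) :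
    A.op β (A.op α x z) z = A.op (α * β) x z := by
  have h := A.assoc α hα β hβ x hx z hz z hz
  have hc : (1 - α) * β / (1 - α * β) ∈ Set.Ioo (0:ℝ) 1 := by
    have h1 : (0:ℝ) < 1 - α * β := by nlinarith [hα.1, hα.2, hβ.1, hβ.2]
    constructor
    · apply div_pos; nlinarith [hα.2, hβ.1]; exact h1
    · rw [div_lt_one h1]; nlinarith [hα.1, hβ.2]
  rw [A.idem _ hc z hz] at h
  exact h

lemma mediality (hMO : A.MO) {p s t x z : ℝ} (hp : p ∈ Set.Ioo (0:ℝ) 1)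
    (hs : s ∈ Set.Ioo (0:ℝ) 1) (ht : t ∈ Set.Ioo (0:ℝ) 1)
    (hx : x ∈ Set.Icc (0:ℝ) 1) (hz : z ∈ Set.Icc (0:ℝ) 1) :
    A.op p (A.op s x z) (A.op t x z) = A.op (p * s + (1 - p) * t) x z := by
  have hB : A.op t x z ∈ Set.Icc (0:ℝ) 1 := A.mem' ht hx hz
  have h1 := A.assoc s hs p hp x hx z hz (A.op t x z) hB
  have hsp : (0:ℝ) < 1 - s * p := by nlinarith [hs.1, hs.2, hp.1, hp.2]
  set c := (1 - s) * p / (1 - s * p) with hcdef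
  have hc : c ∈ Set.Ioo (0:ℝ) 1 := by
    constructor
    · apply div_pos; nlinarith [hs.2, hp.1]; exact hsp
    · rw [hcdef, div_lt_one hsp]; nlinarith [hs.1, hp.2]
  have h1c : 1 - c ∈ Set.Ioo (0:ℝ) 1 := ⟨by linarith [hc.2], by linarith [hc.1]⟩
  have h2 : A.op c z (A.op t x z) = A.op (1 - c) (A.op t x z) z :=
    A.comm c hc z hz _ hB
  have h3 : A.op (1 - c) (A.op t x z) z = A.op (t * (1 - c)) x z :=
    A.rightscale ht h1c hx hz
  rw [h2, h3] at h1
  have htc : t * (1 - c) ∈ Set.Ioo (0:ℝ) 1 := by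
    constructor
    · exact mul_pos ht.1 h1c.1
    · nlinarith [ht.2, h1c.2, ht.1, h1c.1]
  have hsp' : s * p ∈ Set.Ioo (0:ℝ) 1 := by
    constructor
    · exact mul_pos hs.1 hp.1
    · nlinarith [hs.2, hp.2, hs.1, hp.1]
  rw [A.collapse hsp' htc hx hz] at h1
  have e : s * p + t * (1 - c) * (1 - s * p) = p * s + (1 - p) * t := by
    rw [hcdef]
    field_simp
    ring
  rw [e] at h1
  exact h1

lemma mono_p (hMO : A.MO) {x z s s' : ℝ} (hzx : z ≤ x)
    (hx : x ∈ Set.Icc (0:ℝ) 1) (hz : z ∈ Set.Icc (0:ℝ) 1)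
    (hs : s ∈ Set.Ioo (0:ℝ) 1) (hs' : s' ∈ Set.Ioo (0:ℝ) 1) (hss : s ≤ s') :
    A.op s x z ≤ A.op s' x z := by
  rcases eq_or_lt_of_le hss with h | h
  · rw [h]
  have hβ : s / s' ∈ Set.Ioo (0:ℝ) 1 := by
    constructor
    · exact div_pos hs.1 hs'.1
    · rw [div_lt_one hs'.1]; exact h
  have hw : A.op s' x z ∈ Set.Icc (0:ℝ) 1 := A.mem' hs' hx hz
  have key : A.op (s' * (s / s')) x z = A.op (s / s') (A.op s' x z) z :=
    (A.rightscale hs' hβ hx hz).symm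
  have e : s' * (s / s') = s := by
    rw [mul_comm]; exact div_mul_cancel₀ s (ne_of_gt hs'.1)
  rw [e] at key
  rw [key]
  have hzw : z ≤ A.op s' x z := by
    have := A.min_le_op hMO hs' hx hz
    rwa [min_eq_right hzx] at this
  calc A.op (s / s') (A.op s' x z) z
      ≤ A.op (s / s') (A.op s' x z) (A.op s' x z) :=
        A.mono2 hMO hβ hw hz hw hzw
    _ = A.op s' x z := A.idem _ hβ _ hw

lemma near_one (hLC : A.LC) {x z ε : ℝ} (hzx : z ≤ x)
    (hx : x ∈ Set.Icc (0:ℝ) 1) (hz : z ∈ Set.Icc (0:ℝ) 1) (hε : 0 < ε) :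
    ∃ p ∈ Set.Ioo (0:ℝ) 1, x - ε < A.op p x z := by
  by_contra hcon
  push_neg at hcon
  have hLC' := hLC z hz x hx hzx
  have hIoo : Set.Ioo (0:ℝ) 1 ∈ 𝓝[<] (1:ℝ) :=
    Ioo_mem_nhdsLT_of_mem ⟨zero_lt_one, le_refl 1⟩
  have hev : ∀ᶠ p in 𝓝[<] (1:ℝ), A.op p x z ≤ x - ε :=
    Filter.eventually_of_mem hIoo (fun p hp => hcon p hp)
  have hbd : Filter.IsBoundedUnder (· ≥ ·) (𝓝[<] (1:ℝ)) (fun p => A.op p x z) := by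
    refine Filter.isBoundedUnder_of_eventually_ge (a := (0:ℝ)) ?_
    exact Filter.eventually_of_mem hIoo (fun p hp => (A.mem' hp hx hz).1)
  have : Filter.liminf (fun p => A.op p x z) (𝓝[<] (1:ℝ)) ≤ x - ε :=
    Filter.liminf_le_of_frequently_le hev.frequently hbd
  linarith

lemma eats_between (hMO : A.MO) {x y z : ℝ} (h : A.Eats y z) (hzx : z ≤ x) (hxy : x ≤ y)
    (hx : x ∈ Set.Icc (0:ℝ) 1) (hy : y ∈ Set.Icc (0:ℝ) 1) (hz : z ∈ Set.Icc (0:ℝ) 1) :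
    A.Eats y x := by
  intro t ht
  rcases eq_or_lt_of_le ht.2 with h1 | h1
  · rw [h1]; exact A.proj1 y hy x hx
  have ht' : t ∈ Set.Ioo (0:ℝ) 1 := ⟨ht.1, h1⟩
  have hle : A.op t y x ≤ y := by
    have := A.mono2 hMO ht' hy hx hy hxy
    rwa [A.idem t ht' y hy] at this
  have hge : y ≤ A.op t y x := by
    have := A.mono2 hMO ht' hy hz hx hzx
    rwa [h t ht] at this
  linarith

lemma eats_trans {x y z : ℝ} (hyx : A.Eats y x) (hxz : A.Eats x z)
    (hx : x ∈ Set.Icc (0:ℝ) 1) (hy : y ∈ Set.Icc (0:ℝ) 1) (hz : z ∈ Set.Icc (0:ℝ) 1) :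
    A.Eats y z := by
  intro t ht
  rcases eq_or_lt_of_le ht.2 with h1 | h1
  · rw [h1]; exact A.proj1 y hy z hz
  have ht' : t ∈ Set.Ioo (0:ℝ) 1 := ⟨ht.1, h1⟩
  have hhalf : (1/2 : ℝ) ∈ Set.Ioo (0:ℝ) 1 := by norm_num
  have h := A.assoc (1/2) hhalf t ht' y hy x hx z hz
  have hm1 : (1/2 : ℝ) ∈ Set.Ioc (0:ℝ) 1 := ⟨by norm_num, by norm_num⟩
  rw [hyx (1/2) hm1] at h
  have hc : (1 - 1/2) * t / (1 - 1/2 * t) ∈ Set.Ioc (0:ℝ) 1 := by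
    have h2 : (0:ℝ) < 1 - 1/2 * t := by nlinarith [ht'.2]
    constructor
    · apply div_pos
      · nlinarith [ht'.1]
      · exact h2
    · rw [div_le_one h2]; nlinarith [ht'.2]
  rw [hxz _ hc] at h
  have hm2 : (1/2 * t : ℝ) ∈ Set.Ioc (0:ℝ) 1 := ⟨by nlinarith [ht'.1], by nlinarith [ht'.2]⟩
  rw [hyx _ hm2] at h
  exact h

end UCA

end Basics
section VLemmas

open Set Filter Topology

namespace UCA

variable (A : UCA)

lemma V_set_nonempty (x y : ℝ) : ((fun p => A.op p y x) '' Set.Ioc (0:ℝ) 1).Nonempty :=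
  ⟨A.op 1 y x, ⟨1, ⟨zero_lt_one, le_refl 1⟩, rfl⟩⟩

lemma V_lb (hMO : A.MO) {x y : ℝ} (hxy : x ≤ y)
    (hx : x ∈ Set.Icc (0:ℝ) 1) (hy : y ∈ Set.Icc (0:ℝ) 1) :
    ∀ v ∈ ((fun p => A.op p y x) '' Set.Ioc (0:ℝ) 1), x ≤ v := by
  rintro v ⟨p, hp, rfl⟩
  simp only []
  rcases eq_or_lt_of_le hp.2 with h1 | h1
  · show x ≤ A.op p y x
    rw [h1, A.proj1 y hy x hx]; exact hxy
  · have := A.min_le_op hMO ⟨hp.1, h1⟩ hy hx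
    rwa [min_eq_right hxy] at this

lemma V_ge (hMO : A.MO) {x y : ℝ} (hxy : x ≤ y)
    (hx : x ∈ Set.Icc (0:ℝ) 1) (hy : y ∈ Set.Icc (0:ℝ) 1) : x ≤ A.V x y :=
  le_csInf (A.V_set_nonempty x y) (A.V_lb hMO hxy hx hy)

lemma V_le (hMO : A.MO) {x y : ℝ} (hxy : x ≤ y)
    (hx : x ∈ Set.Icc (0:ℝ) 1) (hy : y ∈ Set.Icc (0:ℝ) 1) :
    ∀ p ∈ Set.Ioc (0:ℝ) 1, A.V x y ≤ A.op p y x := by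
  intro p hp
  exact csInf_le ⟨x, A.V_lb hMO hxy hx hy⟩ ⟨p, hp, rfl⟩

lemma V_le_y (hMO : A.MO) {x y : ℝ} (hxy : x ≤ y)
    (hx : x ∈ Set.Icc (0:ℝ) 1) (hy : y ∈ Set.Icc (0:ℝ) 1) : A.V x y ≤ y := by
  have := A.V_le hMO hxy hx hy 1 ⟨zero_lt_one, le_refl 1⟩
  rwa [A.proj1 y hy x hx] at this

lemma V_mem (hMO : A.MO) {x y : ℝ} (hxy : x ≤ y)
    (hx : x ∈ Set.Icc (0:ℝ) 1) (hy : y ∈ Set.Icc (0:ℝ) 1) :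
    A.V x y ∈ Set.Icc (0:ℝ) 1 :=
  ⟨hx.1.trans (A.V_ge hMO hxy hx hy), (A.V_le_y hMO hxy hx hy).trans hy.2⟩

lemma V_exists {x y ε : ℝ} (hε : 0 < ε) :
    ∃ p ∈ Set.Ioc (0:ℝ) 1, A.op p y x < A.V x y + ε := by
  have h : sInf ((fun p => A.op p y x) '' Set.Ioc (0:ℝ) 1) < A.V x y + ε :=
    lt_add_of_pos_right _ hε
  obtain ⟨v, hv, hlt⟩ := exists_lt_of_csInf_lt (A.V_set_nonempty x y) h
  rcases hv with ⟨p, hp, rfl⟩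
  exact ⟨p, hp, hlt⟩

lemma V_eats (hMO : A.MO) (hUC : A.UC) {x y : ℝ} (hx0 : 0 ≤ x) (hxy : x ≤ y)
    (hy1 : y < 1) : A.Eats (A.V x y) x := by
  have hx : x ∈ Set.Icc (0:ℝ) 1 := ⟨hx0, (hxy.trans_lt hy1).le⟩
  have hy : y ∈ Set.Icc (0:ℝ) 1 := ⟨hx0.trans hxy, hy1.le⟩
  set V := A.V x y with hVdef
  have hVmem : V ∈ Set.Icc (0:ℝ) 1 := A.V_mem hMO hxy hx hy
  have hxV : x ≤ V := A.V_ge hMO hxy hx hy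
  have hVy : V ≤ y := A.V_le_y hMO hxy hx hy
  have hVlt1 : V < 1 := hVy.trans_lt hy1
  intro t ht
  rcases eq_or_lt_of_le ht.2 with h1 | h1
  · rw [h1]; exact A.proj1 V hVmem x hx
  have ht' : t ∈ Set.Ioo (0:ℝ) 1 := ⟨ht.1, h1⟩
  have hle : A.op t V x ≤ V := by
    have := A.mono2 hMO ht' hVmem hx hVmem hxV
    rwa [A.idem t ht' V hVmem] at this
  have hδ : (0:ℝ) < 1 - y := by linarith
  have hIoo : Set.Ioo (0:ℝ) (1 - y) ∈ 𝓝[>] (0:ℝ) :=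
    Ioo_mem_nhdsGT_of_mem ⟨le_refl 0, hδ⟩
  have hev : ∀ᶠ ε in 𝓝[>] (0:ℝ), V ≤ A.op t (V + ε) (x + ε) := by
    refine Filter.eventually_of_mem hIoo (fun ε hε => ?_)
    have hVε : V + ε ∈ Set.Icc (0:ℝ) 1 :=
      ⟨by linarith [hVmem.1, hε.1], by linarith [hVy, hε.2]⟩
    have hxε : x + ε ∈ Set.Icc (0:ℝ) 1 :=
      ⟨by linarith [hε.1], by linarith [hxy, hε.2]⟩
    obtain ⟨p, hp, hplt⟩ := A.V_exists (x := x) (y := y) hε.1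
    have hw : A.op p y x ∈ Set.Icc (0:ℝ) 1 := by
      rcases eq_or_lt_of_le hp.2 with h2 | h2
      · rw [h2, A.proj1 y hy x hx]; exact hy
      · exact A.mem' ⟨hp.1, h2⟩ hy hx
    have hwge : V ≤ A.op t (A.op p y x) x := by
      rcases eq_or_lt_of_le hp.2 with h2 | h2
      · rw [h2, A.proj1 y hy x hx]
        exact A.V_le hMO hxy hx hy t ⟨ht'.1, ht'.2.le⟩
      · have hp' : p ∈ Set.Ioo (0:ℝ) 1 := ⟨hp.1, h2⟩
        rw [A.rightscale hp' ht' hy hx]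
        refine A.V_le hMO hxy hx hy (p * t) ⟨mul_pos hp'.1 ht'.1, ?_⟩
        nlinarith [hp'.2, ht'.2, hp'.1, ht'.1]
    calc V ≤ A.op t (A.op p y x) x := hwge
      _ ≤ A.op t (V + ε) x := hMO _ hw _ hVε x hx t ht' (by linarith [hplt])
      _ ≤ A.op t (V + ε) (x + ε) :=
          A.mono2 hMO ht' hVε hx hxε (by linarith [hε.1])
  have hbdd : Filter.IsBoundedUnder (· ≤ ·) (𝓝[>] (0:ℝ))
      (fun ε => A.op t (V + ε) (x + ε)) := by
    refine Filter.isBoundedUnder_of_eventually_le (a := (1:ℝ)) ?_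
    refine Filter.eventually_of_mem hIoo (fun ε hε => ?_)
    have hVε : V + ε ∈ Set.Icc (0:ℝ) 1 :=
      ⟨by linarith [hVmem.1, hε.1], by linarith [hVy, hε.2]⟩
    have hxε : x + ε ∈ Set.Icc (0:ℝ) 1 :=
      ⟨by linarith [hε.1], by linarith [hxy, hε.2]⟩
    exact (A.mem' ht' hVε hxε).2
  have h1' : V ≤ Filter.limsup (fun ε => A.op t (V + ε) (x + ε)) (𝓝[>] (0:ℝ)) :=
    Filter.le_limsup_of_frequently_le hev.frequently hbdd
  have h2 := hUC V ⟨hVmem.1, hVlt1⟩ x ⟨hx0, hxy.trans_lt hy1⟩ t ht'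
  exact le_antisymm hle (h1'.trans h2)

end UCA

end VLemmas
section Gap

open Set Filter Topology

namespace UCA

variable (A : UCA) {a b : ℝ}

lemma gapIcc (hab : A.Delta a b) {x : ℝ} (hx : x ∈ Set.Ico a b) :
    x ∈ Set.Icc (0:ℝ) 1 :=
  ⟨hab.1.1.1.trans hx.1, hx.2.le.trans hab.2.1.1.2⟩

lemma gapV (hMO : A.MO) (hUC : A.UC) (hab : A.Delta a b)
    {x : ℝ} (hx : x ∈ Set.Ico a b) : A.V a x = a := by
  have ha : a ∈ Set.Icc (0:ℝ) 1 := hab.1.1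
  have hxm : x ∈ Set.Icc (0:ℝ) 1 := A.gapIcc hab hx
  have hax : a ≤ x := hx.1
  have hx1 : x < 1 := lt_of_lt_of_le hx.2 hab.2.1.1.2
  have hVa : a ≤ A.V a x := A.V_ge hMO hax ha hxm
  have hVx : A.V a x ≤ x := A.V_le_y hMO hax ha hxm
  have hVmem : A.V a x ∈ Set.Icc (0:ℝ) 1 := A.V_mem hMO hax ha hxm
  have hVea : A.Eats (A.V a x) a := A.V_eats hMO hUC ha.1 hax hx1
  have h0mem : (0:ℝ) ∈ Set.Icc (0:ℝ) 1 := ⟨le_refl 0, zero_le_one⟩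
  have hV0 : A.Eats (A.V a x) 0 := A.eats_trans hVea hab.1.2 ha hVmem h0mem
  by_contra hne
  have hlt : a < A.V a x := lt_of_le_of_ne hVa (Ne.symm hne)
  have hmem : A.V a x ∈ Set.Ioo a b ∩ A.E :=
    ⟨⟨hlt, lt_of_le_of_lt hVx hx.2⟩, ⟨hVmem, hV0⟩⟩
  rw [hab.2.2.2] at hmem
  exact hmem

lemma claimA (hMO : A.MO) (hUC : A.UC) (hLC : A.LC) (hab : A.Delta a b)
    {y p : ℝ} (hy : y ∈ Set.Ioo a b) (hp : p ∈ Set.Ioo (0:ℝ) 1) :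
    A.op p y a < y := by
  have ha : a ∈ Set.Icc (0:ℝ) 1 := hab.1.1
  have hym : y ∈ Set.Icc (0:ℝ) 1 := A.gapIcc hab ⟨hy.1.le, hy.2⟩
  have hay : a ≤ y := hy.1.le
  have hle : A.op p y a ≤ y := by
    have := A.op_le_max hMO hp hym ha
    rwa [max_eq_left hay] at this
  rcases lt_or_eq_of_le hle with h | heq
  · exact h
  exfalso
  -- step (i)/(ii): op β y a = op (p^n * β) y a
  have stepi : ∀ β ∈ Set.Ioo (0:ℝ) 1, A.op β y a = A.op (p * β) y a := by
    intro β hβ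
    have := A.rightscale hp hβ hym ha
    rw [heq] at this
    exact this
  have powmem : ∀ n : ℕ, ∀ β ∈ Set.Ioo (0:ℝ) 1, p ^ n * β ∈ Set.Ioo (0:ℝ) 1 := by
    intro n β hβ
    constructor
    · exact mul_pos (pow_pos hp.1 n) hβ.1
    · calc p ^ n * β ≤ 1 * β := by
            apply mul_le_mul_of_nonneg_right _ hβ.1.le
            exact pow_le_one₀ hp.1.le hp.2.le
        _ = β := one_mul β
        _ < 1 := hβ.2
  have stepii : ∀ n : ℕ, ∀ β ∈ Set.Ioo (0:ℝ) 1, A.op β y a = A.op (p ^ n * β) y a := by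
    intro n
    induction n with
    | zero => intro β hβ; rw [pow_zero, one_mul]
    | succ n ih =>
      intro β hβ
      have h1 := ih β hβ
      have h2 := stepi (p ^ n * β) (powmem n β hβ)
      rw [h1, h2]
      ring_nf
  -- step (iii)/(iv): op β y a = a
  have stepiv : ∀ β ∈ Set.Ioo (0:ℝ) 1, A.op β y a = a := by
    intro β hβ
    have hgea : a ≤ A.op β y a := by
      have := A.min_le_op hMO hβ hym ha
      rwa [min_eq_right hay] at this
    have hlea : A.op β y a ≤ a := by
      apply le_of_forall_pos_le_add
      intro ε hε
      have hV := A.gapV hMO hUC hab (x := y) ⟨hay, hy.2⟩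
      obtain ⟨q, hq, hqlt⟩ := A.V_exists (x := a) (y := y) hε
      rw [hV] at hqlt
      obtain ⟨n, hn⟩ := exists_pow_lt_of_lt_one hq.1 hp.2
      have hpnβ : p ^ n * β ∈ Set.Ioo (0:ℝ) 1 := powmem n β hβ
      have hpnq : p ^ n * β ≤ q := by
        calc p ^ n * β ≤ p ^ n * 1 := by
              apply mul_le_mul_of_nonneg_left hβ.2.le (pow_pos hp.1 n).le
          _ = p ^ n := mul_one _
          _ ≤ q := hn.le
      have hchain : A.op (p ^ n * β) y a ≤ A.op q y a := by
        rcases eq_or_lt_of_le hq.2 with h2 | h2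
        · rw [h2, A.proj1 y hym a ha]
          have := A.op_le_max hMO hpnβ hym ha
          rwa [max_eq_left hay] at this
        · exact A.mono_p hMO hay hym ha hpnβ ⟨hq.1, h2⟩ hpnq
      rw [stepii n β hβ]
      linarith
    linarith
  -- step (v): contradiction with LC
  obtain ⟨s, hs, hslt⟩ := A.near_one hLC hay hym ha (ε := y - a) (by linarith [hy.1])
  rw [stepiv s hs] at hslt
  linarith

lemma Lflat (hMO : A.MO) (hLC : A.LC) {x z p q : ℝ} (hzx : z ≤ x)
    (hx : x ∈ Set.Icc (0:ℝ) 1) (hz : z ∈ Set.Icc (0:ℝ) 1)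
    (hp : p ∈ Set.Ioo (0:ℝ) 1) (hq : q ∈ Set.Ioo (0:ℝ) 1) (hpq : p < q)
    (heq : A.op p x z = A.op q x z) : A.op p x z = x := by
  have h1p : (0:ℝ) < 1 - p := by linarith [hp.2]
  have flat_step : ∀ t, t ∈ Set.Ioo (0:ℝ) 1 → p < t → A.op t x z = A.op p x z →
      A.op (t + (t - p) * (1 - t) / (1 - p)) x z = A.op p x z := by
    intro t ht hpt hut
    have hα : (t - p) / (1 - p) ∈ Set.Ioo (0:ℝ) 1 := by
      constructor
      · apply div_pos
        · linarith
        · exact h1p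
      · rw [div_lt_one h1p]; linarith [ht.2]
    have c1 := A.collapse hα hp hx hz
    have c2 := A.collapse hα ht hx hz
    rw [hut] at c2
    have c3 := c1.symm.trans c2
    have e1 : (t - p) / (1 - p) + p * (1 - (t - p) / (1 - p)) = t := by
      field_simp
      ring
    have e2 : (t - p) / (1 - p) + t * (1 - (t - p) / (1 - p)) =
        t + (t - p) * (1 - t) / (1 - p) := by
      field_simp
      ring
    rw [e1, e2] at c3
    exact c3.symm.trans hut
  set r : ℝ := (1 - q) / (1 - p) with hrdef
  have hr : r ∈ Set.Ioo (0:ℝ) 1 := by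
    constructor
    · apply div_pos
      · linarith [hq.2]
      · exact h1p
    · rw [hrdef, div_lt_one h1p]; linarith
  have hrq : (1 - p) * r = 1 - q := by
    rw [hrdef]; field_simp
  set T : ℕ → ℝ := fun n => 1 - (1 - p) * r ^ 2 ^ n with hTdef
  have hTq : ∀ n, q ≤ T n := by
    intro n
    have h1 : r ^ 2 ^ n ≤ r := by
      calc r ^ 2 ^ n ≤ r ^ 1 :=
            pow_le_pow_of_le_one hr.1.le hr.2.le Nat.one_le_two_pow
        _ = r := pow_one r
    have h2 : (1 - p) * r ^ 2 ^ n ≤ (1 - p) * r :=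
      mul_le_mul_of_nonneg_left h1 h1p.le
    simp only [hTdef]
    rw [hrq] at h2
    linarith
  have hT1 : ∀ n, T n < 1 := by
    intro n
    have : 0 < (1 - p) * r ^ 2 ^ n := mul_pos h1p (pow_pos hr.1 _)
    simp only [hTdef]
    linarith
  have hTmem : ∀ n, T n ∈ Set.Ioo (0:ℝ) 1 := fun n =>
    ⟨lt_of_lt_of_le hq.1 (hTq n), hT1 n⟩
  have claim1 : ∀ n, A.op (T n) x z = A.op p x z := by
    intro n
    induction n with
    | zero =>
      have : T 0 = q := by
        simp only [hTdef]
        rw [pow_zero, pow_one, hrq]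
        ring
      rw [this]
      exact heq.symm
    | succ n ih =>
      have hfs := flat_step (T n) (hTmem n) (lt_of_lt_of_le hpq (hTq n)) ih
      have e3 : T n + (T n - p) * (1 - T n) / (1 - p) = T (n + 1) := by
        simp only [hTdef]
        have e4 : r ^ 2 ^ (n + 1) = (r ^ 2 ^ n) ^ 2 := by
          rw [pow_succ 2 n, pow_mul]
        rw [e4]
        field_simp
        try ring
      rw [e3] at hfs
      exact hfs
  have claim2 : ∀ s, s ∈ Set.Ioo (0:ℝ) 1 → p ≤ s → A.op s x z = A.op p x z := by
    intro s hs hps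
    obtain ⟨m, hm⟩ := exists_pow_lt_of_lt_one
      (show (0:ℝ) < (1 - s) / (1 - p) from div_pos (by linarith [hs.2]) h1p) hr.2
    have h5 : r ^ 2 ^ m ≤ r ^ m :=
      pow_le_pow_of_le_one hr.1.le hr.2.le (Nat.lt_two_pow_self (n := m)).le
    have h6 : (1 - p) * r ^ 2 ^ m < 1 - s := by
      calc (1 - p) * r ^ 2 ^ m ≤ (1 - p) * r ^ m :=
            mul_le_mul_of_nonneg_left h5 h1p.le
        _ < (1 - p) * ((1 - s) / (1 - p)) :=
            mul_lt_mul_of_pos_left hm h1p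
        _ = 1 - s := by field_simp
    have h7 : s < T m := by simp only [hTdef]; linarith
    have h8 : A.op s x z ≤ A.op (T m) x z :=
      A.mono_p hMO hzx hx hz hs (hTmem m) h7.le
    have h9 : A.op p x z ≤ A.op s x z :=
      A.mono_p hMO hzx hx hz hp hs hps
    rw [claim1 m] at h8
    linarith
  -- conclusion via LC
  have hle : A.op p x z ≤ x := by
    have := A.op_le_max hMO hp hx hz
    rwa [max_eq_left hzx] at this
  rcases eq_or_lt_of_le hle with h | h
  · exact h
  exfalso
  obtain ⟨s, hs, hslt⟩ := A.near_one hLC hzx hx hz (ε := x - A.op p x z) (by linarith)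
  have : A.op s x z ≤ A.op p x z := by
    rcases le_or_gt s p with h1 | h1
    · exact A.mono_p hMO hzx hx hz hs hp h1
    · rw [claim2 s hs h1.le]
  linarith

lemma strictp (hMO : A.MO) (hUC : A.UC) (hLC : A.LC) (hab : A.Delta a b)
    {y p q : ℝ} (hy : y ∈ Set.Ioo a b) (hp : p ∈ Set.Ioo (0:ℝ) 1)
    (hq : q ∈ Set.Ioo (0:ℝ) 1) (hpq : p < q) : A.op p y a < A.op q y a := by
  have ha : a ∈ Set.Icc (0:ℝ) 1 := hab.1.1
  have hym : y ∈ Set.Icc (0:ℝ) 1 := A.gapIcc hab ⟨hy.1.le, hy.2⟩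
  have hay : a ≤ y := hy.1.le
  have hle : A.op p y a ≤ A.op q y a := A.mono_p hMO hay hym ha hp hq hpq.le
  rcases lt_or_eq_of_le hle with h | h
  · exact h
  exfalso
  have := A.Lflat hMO hLC hay hym ha hp hq hpq h
  have h2 := A.claimA hMO hUC hLC hab hy hp
  linarith

lemma gt_a (hMO : A.MO) (hUC : A.UC) (hLC : A.LC) (hab : A.Delta a b)
    {y p : ℝ} (hy : y ∈ Set.Ioo a b) (hp : p ∈ Set.Ioo (0:ℝ) 1) :
    a < A.op p y a := by
  have ha : a ∈ Set.Icc (0:ℝ) 1 := hab.1.1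
  have hym : y ∈ Set.Icc (0:ℝ) 1 := A.gapIcc hab ⟨hy.1.le, hy.2⟩
  have hay : a ≤ y := hy.1.le
  have hge : a ≤ A.op p y a := by
    have := A.min_le_op hMO hp hym ha
    rwa [min_eq_right hay] at this
  rcases lt_or_eq_of_le hge with h | h
  · exact h
  exfalso
  have hp2 : p / 2 ∈ Set.Ioo (0:ℝ) 1 := ⟨by linarith [hp.1], by linarith [hp.2, hp.1]⟩
  have hlt := A.strictp hMO hUC hLC hab hy hp2 hp (by linarith [hp.1])
  have hge2 : a ≤ A.op (p/2) y a := by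
    have := A.min_le_op hMO hp2 hym ha
    rwa [min_eq_right hay] at this
  rw [← h] at hlt
  linarith

lemma op_mem_gap (hMO : A.MO) (hUC : A.UC) (hLC : A.LC) (hab : A.Delta a b)
    {y p : ℝ} (hy : y ∈ Set.Ioo a b) (hp : p ∈ Set.Ioo (0:ℝ) 1) :
    A.op p y a ∈ Set.Ioo a b := by
  have ha : a ∈ Set.Icc (0:ℝ) 1 := hab.1.1
  have hym : y ∈ Set.Icc (0:ℝ) 1 := A.gapIcc hab ⟨hy.1.le, hy.2⟩
  refine ⟨A.gt_a hMO hUC hLC hab hy hp, ?_⟩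
  exact lt_trans (A.claimA hMO hUC hLC hab hy hp) hy.2

lemma Vx (hMO : A.MO) (hUC : A.UC) (hLC : A.LC) (hab : A.Delta a b)
    {x y : ℝ} (hx : x ∈ Set.Ico a b) (hy : y ∈ Set.Ico a b) (hxy : x ≤ y) :
    A.V x y = x := by
  have ha : a ∈ Set.Icc (0:ℝ) 1 := hab.1.1
  have hxm : x ∈ Set.Icc (0:ℝ) 1 := A.gapIcc hab hx
  have hym : y ∈ Set.Icc (0:ℝ) 1 := A.gapIcc hab hy
  have hy1 : y < 1 := lt_of_lt_of_le hy.2 hab.2.1.1.2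
  have hxV : x ≤ A.V x y := A.V_ge hMO hxy hxm hym
  rcases lt_or_eq_of_le hxV with hlt | h
  swap
  · exact h.symm
  exfalso
  set V := A.V x y with hVdef
  have hVy : V ≤ y := A.V_le_y hMO hxy hxm hym
  have hVmem : V ∈ Set.Icc (0:ℝ) 1 := A.V_mem hMO hxy hxm hym
  have hVab : V ∈ Set.Ioo a b := ⟨lt_of_le_of_lt hx.1 hlt, lt_of_le_of_lt hVy hy.2⟩
  have hVeats : A.Eats V x := A.V_eats hMO hUC hxm.1 hxy hy1
  have haV : a ≤ V := hVab.1.le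
  obtain ⟨p, hp, hplt⟩ := A.near_one hLC haV hVmem ha (ε := V - x) (by linarith)
  set w := A.op p V a with hwdef
  have hxw : x < w := by simp only [hwdef]; linarith
  have hwV : w < V := A.claimA hMO hUC hLC hab hVab hp
  have hwmem : w ∈ Set.Icc (0:ℝ) 1 := A.mem' hp hVmem ha
  have hhalf : (1/2 : ℝ) ∈ Set.Ioo (0:ℝ) 1 := by norm_num
  have h1 : A.op (1/2) V x = V := hVeats (1/2) ⟨by norm_num, by norm_num⟩
  have h2 : A.op (1/2) V x ≤ A.op (1/2) V w :=
    A.mono2 hMO hhalf hVmem hxm hwmem hxw.le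
  have h3 : A.op (1/2) V w = A.op (1/2 + p * (1 - 1/2)) V a := by
    rw [hwdef]
    exact A.collapse hhalf hp hVmem ha
  have hparam : 1/2 + p * (1 - 1/2) ∈ Set.Ioo (0:ℝ) 1 :=
    ⟨by linarith [hp.1], by linarith [hp.2]⟩
  have h4 : A.op (1/2 + p * (1 - 1/2)) V a < V :=
    A.claimA hMO hUC hLC hab hVab hparam
  rw [h1, h3] at h2
  linarith

lemma surj_gap (hMO : A.MO) (hUC : A.UC) (hLC : A.LC) (hab : A.Delta a b)
    {y v : ℝ} (hy : y ∈ Set.Ioo a b) (hv : v ∈ Set.Ioo a y) :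
    ∃ t ∈ Set.Ioo (0:ℝ) 1, A.op t y a = v := by
  have ha : a ∈ Set.Icc (0:ℝ) 1 := hab.1.1
  have hym : y ∈ Set.Icc (0:ℝ) 1 := A.gapIcc hab ⟨hy.1.le, hy.2⟩
  have hay : a ≤ y := hy.1.le
  have hvm : v ∈ Set.Icc (0:ℝ) 1 :=
    ⟨ha.1.trans hv.1.le, hv.2.le.trans hym.2⟩
  have hvb : v < b := lt_trans hv.2 hy.2
  set S : Set ℝ := {t | t ∈ Set.Ioo (0:ℝ) 1 ∧ A.op t y a ≤ v} with hSdef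
  -- S is nonempty
  have hVa : A.V a y = a := A.gapV hMO hUC hab ⟨hay, hy.2⟩
  obtain ⟨q, hq, hqlt⟩ := A.V_exists (x := a) (y := y) (ε := v - a) (by linarith [hv.1])
  rw [hVa] at hqlt
  have hq1 : q < 1 := by
    rcases eq_or_lt_of_le hq.2 with h1 | h1
    · exfalso
      rw [h1, A.proj1 y hym a ha] at hqlt
      linarith [hv.2]
    · exact h1
  have hqS : q ∈ S := ⟨⟨hq.1, hq1⟩, by linarith⟩
  have hSne : S.Nonempty := ⟨q, hqS⟩
  -- S is bounded above, and below any witness of near_one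
  obtain ⟨s₀, hs₀, hs₀lt⟩ := A.near_one hLC hay hym ha (ε := y - v) (by linarith [hv.2])
  have hS_le : ∀ t ∈ S, t ≤ s₀ := by
    intro t ht
    by_contra hcon
    push_neg at hcon
    have : A.op s₀ y a ≤ A.op t y a := A.mono_p hMO hay hym ha hs₀ ht.1 hcon.le
    have := ht.2
    linarith
  have hbdd : BddAbove S := ⟨s₀, hS_le⟩
  set t₀ := sSup S with ht₀def
  have ht₀q : q ≤ t₀ := le_csSup hbdd hqS
  have ht₀s : t₀ ≤ s₀ := csSup_le hSne hS_le
  have ht₀ : t₀ ∈ Set.Ioo (0:ℝ) 1 :=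
    ⟨lt_of_lt_of_le hq.1 ht₀q, lt_of_le_of_lt ht₀s hs₀.2⟩
  have hut₀mem : A.op t₀ y a ∈ Set.Ioo a b := A.op_mem_gap hMO hUC hLC hab hy ht₀
  have hut₀le : A.op t₀ y a ≤ y := by
    have := A.op_le_max hMO ht₀ hym ha
    rwa [max_eq_left hay] at this
  have hut₀Ico : A.op t₀ y a ∈ Set.Ico a b := ⟨hut₀mem.1.le, hut₀mem.2⟩
  -- v ≤ u t₀
  have big1 : v ≤ A.op t₀ y a := by
    apply le_of_forall_pos_le_add
    intro ε hε
    have hVt₀ : A.V (A.op t₀ y a) y = A.op t₀ y a :=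
      A.Vx hMO hUC hLC hab hut₀Ico ⟨hay, hy.2⟩ hut₀le
    obtain ⟨p, hp, hplt⟩ := A.V_exists (x := A.op t₀ y a) (y := y) hε
    rw [hVt₀] at hplt
    rcases eq_or_lt_of_le hp.2 with h1 | h1
    · rw [h1, A.proj1 y hym _ (A.mem' ht₀ hym ha)] at hplt
      linarith [hv.2]
    · have hp' : p ∈ Set.Ioo (0:ℝ) 1 := ⟨hp.1, h1⟩
      have hcol := A.collapse hp' ht₀ hym ha
      set γ := p + t₀ * (1 - p) with hγdef
      have hγmem : γ ∈ Set.Ioo (0:ℝ) 1 :=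
        ⟨by nlinarith [hp'.1, ht₀.1, hp'.2], by nlinarith [hp'.2, ht₀.2]⟩
      have hγgt : t₀ < γ := by
        simp only [hγdef]
        nlinarith [hp'.1, ht₀.2]
      have hγnS : γ ∉ S := by
        intro hmem
        have := le_csSup hbdd hmem
        linarith
      have hγv : v < A.op γ y a := by
        by_contra hcon
        push_neg at hcon
        exact hγnS ⟨hγmem, hcon⟩
      rw [hcol.symm] at hγv
      linarith
  -- u t₀ ≤ v
  have big2 : A.op t₀ y a ≤ v := by
    by_contra hcon
    push_neg at hcon
    have claim : ∀ p ∈ Set.Ioo (0:ℝ) 1, A.op t₀ y a ≤ A.op p y v := by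
      intro p hp
      have h1p : (0:ℝ) < 1 - p := by linarith [hp.2]
      have hlt : (t₀ - p) / (1 - p) < t₀ := by
        rw [div_lt_iff₀ h1p]
        nlinarith [hp.1, ht₀.2]
      obtain ⟨t, htS, htgt⟩ := exists_lt_of_lt_csSup hSne (by rw [← ht₀def]; exact hlt)
      set s' := p + t * (1 - p) with hs'def
      have hs'mem : s' ∈ Set.Ioo (0:ℝ) 1 :=
        ⟨by nlinarith [hp.1, htS.1.1, h1p], by nlinarith [htS.1.2, hp.2]⟩
      have hs'ge : t₀ ≤ s' := by
        simp only [hs'def]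
        rw [div_lt_iff₀ h1p] at htgt
        linarith
      have hmono : A.op t₀ y a ≤ A.op s' y a :=
        A.mono_p hMO hay hym ha ht₀ hs'mem hs'ge
      have hcol : A.op s' y a = A.op p y (A.op t y a) :=
        (A.collapse hp htS.1 hym ha).symm
      have hm2 : A.op p y (A.op t y a) ≤ A.op p y v :=
        A.mono2 hMO hp hym (A.mem' htS.1 hym ha) hvm htS.2
      rw [hcol] at hmono
      linarith
    have hVv : A.V v y = v :=
      A.Vx hMO hUC hLC hab ⟨hv.1.le, hvb⟩ ⟨hay, hy.2⟩ hv.2.le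
    obtain ⟨p, hp, hplt⟩ := A.V_exists (x := v) (y := y) (ε := A.op t₀ y a - v) (by linarith)
    rw [hVv] at hplt
    rcases eq_or_lt_of_le hp.2 with h1 | h1
    · rw [h1, A.proj1 y hym v hvm] at hplt
      linarith
    · have := claim p ⟨hp.1, h1⟩
      linarith
  exact ⟨t₀, ht₀, le_antisymm big2 big1⟩

end UCA

end Gap
section Theta

open Set Filter Topology

namespace UCA

variable (A : UCA) {a b : ℝ}

/-- The coordinate of `x` in `(a,y)`: the unique `t ∈ (0,1)` with `y ⊕_t a = x`. -/
noncomputable def theta (A : UCA) (a y x : ℝ) : ℝ :=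
  sSup {t | t ∈ Set.Ioo (0:ℝ) 1 ∧ A.op t y a = x}

lemma theta_unique_aux (hMO : A.MO) (hUC : A.UC) (hLC : A.LC) (hab : A.Delta a b)
    {y : ℝ} (hy : y ∈ Set.Ioo a b) {s t : ℝ} (hs : s ∈ Set.Ioo (0:ℝ) 1)
    (ht : t ∈ Set.Ioo (0:ℝ) 1) (h : A.op s y a = A.op t y a) : s = t := by
  rcases lt_trichotomy s t with h1 | h1 | h1
  · exfalso; have := A.strictp hMO hUC hLC hab hy hs ht h1; linarith
  · exact h1
  · exfalso; have := A.strictp hMO hUC hLC hab hy ht hs h1; linarith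

lemma theta_spec (hMO : A.MO) (hUC : A.UC) (hLC : A.LC) (hab : A.Delta a b)
    {y x : ℝ} (hy : y ∈ Set.Ioo a b) (hx : x ∈ Set.Ioo a y) :
    A.theta a y x ∈ Set.Ioo (0:ℝ) 1 ∧ A.op (A.theta a y x) y a = x := by
  obtain ⟨t, ht, hteq⟩ := A.surj_gap hMO hUC hLC hab hy hx
  have hset : {s | s ∈ Set.Ioo (0:ℝ) 1 ∧ A.op s y a = x} = {t} := by
    ext s
    simp only [Set.mem_setOf_eq, Set.mem_singleton_iff]
    constructor
    · rintro ⟨hs, hseq⟩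
      exact A.theta_unique_aux hMO hUC hLC hab hy hs ht (hseq.trans hteq.symm)
    · rintro rfl
      exact ⟨ht, hteq⟩
  rw [UCA.theta, hset, csSup_singleton]
  exact ⟨ht, hteq⟩

lemma theta_eq (hMO : A.MO) (hUC : A.UC) (hLC : A.LC) (hab : A.Delta a b)
    {y x t : ℝ} (hy : y ∈ Set.Ioo a b) (ht : t ∈ Set.Ioo (0:ℝ) 1)
    (heq : A.op t y a = x) : A.theta a y x = t := by
  have hx : x ∈ Set.Ioo a y := by
    rw [← heq]
    exact ⟨A.gt_a hMO hUC hLC hab hy ht, A.claimA hMO hUC hLC hab hy ht⟩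
  obtain ⟨hmem, hspec⟩ := A.theta_spec hMO hUC hLC hab hy hx
  exact A.theta_unique_aux hMO hUC hLC hab hy hmem ht (hspec.trans heq.symm)

lemma theta_scale (hMO : A.MO) (hUC : A.UC) (hLC : A.LC) (hab : A.Delta a b)
    {y x p : ℝ} (hy : y ∈ Set.Ioo a b) (hx : x ∈ Set.Ioo a y)
    (hp : p ∈ Set.Ioo (0:ℝ) 1) :
    A.theta a y (A.op p x a) = A.theta a y x * p := by
  have ha : a ∈ Set.Icc (0:ℝ) 1 := hab.1.1
  have hym : y ∈ Set.Icc (0:ℝ) 1 := A.gapIcc hab ⟨hy.1.le, hy.2⟩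
  obtain ⟨htm, hts⟩ := A.theta_spec hMO hUC hLC hab hy hx
  have hmul : A.theta a y x * p ∈ Set.Ioo (0:ℝ) 1 :=
    ⟨mul_pos htm.1 hp.1, by nlinarith [htm.2, hp.2, htm.1, hp.1]⟩
  apply A.theta_eq hMO hUC hLC hab hy hmul
  rw [← A.rightscale htm hp hym ha, hts]

lemma theta_med (hMO : A.MO) (hUC : A.UC) (hLC : A.LC) (hab : A.Delta a b)
    {y x x' p : ℝ} (hy : y ∈ Set.Ioo a b) (hx : x ∈ Set.Ioo a y)
    (hx' : x' ∈ Set.Ioo a y) (hp : p ∈ Set.Ioo (0:ℝ) 1) :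
    A.theta a y (A.op p x x') = p * A.theta a y x + (1 - p) * A.theta a y x' := by
  have ha : a ∈ Set.Icc (0:ℝ) 1 := hab.1.1
  have hym : y ∈ Set.Icc (0:ℝ) 1 := A.gapIcc hab ⟨hy.1.le, hy.2⟩
  obtain ⟨hsm, hss⟩ := A.theta_spec hMO hUC hLC hab hy hx
  obtain ⟨htm, hts⟩ := A.theta_spec hMO hUC hLC hab hy hx'
  have hparam : p * A.theta a y x + (1 - p) * A.theta a y x' ∈ Set.Ioo (0:ℝ) 1 := by
    constructor
    · have := mul_pos hp.1 hsm.1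
      have h2 : 0 < (1 - p) * A.theta a y x' := mul_pos (by linarith [hp.2]) htm.1
      linarith
    · nlinarith [hp.1, hp.2, hsm.2, htm.2, hsm.1, htm.1]
  apply A.theta_eq hMO hUC hLC hab hy hparam
  rw [← A.mediality hMO hp hsm htm hym ha, hss, hts]

lemma theta_compat (hMO : A.MO) (hUC : A.UC) (hLC : A.LC) (hab : A.Delta a b)
    {y y' x : ℝ} (hy : y ∈ Set.Ioo a b) (hy' : y' ∈ Set.Ioo a b) (hyy' : y < y')
    (hx : x ∈ Set.Ioo a y) :
    A.theta a y' x = A.theta a y' y * A.theta a y x := by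
  have ha : a ∈ Set.Icc (0:ℝ) 1 := hab.1.1
  have hy'm : y' ∈ Set.Icc (0:ℝ) 1 := A.gapIcc hab ⟨hy'.1.le, hy'.2⟩
  obtain ⟨hrm, hrs⟩ := A.theta_spec hMO hUC hLC hab hy' ⟨hy.1, hyy'⟩
  obtain ⟨htm, hts⟩ := A.theta_spec hMO hUC hLC hab hy hx
  have hmul : A.theta a y' y * A.theta a y x ∈ Set.Ioo (0:ℝ) 1 :=
    ⟨mul_pos hrm.1 htm.1, by nlinarith [hrm.2, htm.2, hrm.1, htm.1]⟩
  apply A.theta_eq hMO hUC hLC hab hy' hmul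
  rw [← A.rightscale hrm htm hy'm ha, hrs, hts]

lemma theta_mono (hMO : A.MO) (hUC : A.UC) (hLC : A.LC) (hab : A.Delta a b)
    {y x x' : ℝ} (hy : y ∈ Set.Ioo a b) (hx : x ∈ Set.Ioo a y)
    (hx' : x' ∈ Set.Ioo a y) (hxx' : x < x') :
    A.theta a y x < A.theta a y x' := by
  obtain ⟨hsm, hss⟩ := A.theta_spec hMO hUC hLC hab hy hx
  obtain ⟨htm, hts⟩ := A.theta_spec hMO hUC hLC hab hy hx'
  by_contra hcon
  push_neg at hcon
  rcases eq_or_lt_of_le hcon with h1 | h1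
  · rw [h1, hss] at hts
    linarith
  · have := A.strictp hMO hUC hLC hab hy htm hsm h1
    rw [hss, hts] at this
    linarith
end UCA

end Theta
section BigTheta

open Set Filter Topology

namespace UCA

variable (A : UCA) {a b : ℝ}

/-- Global coordinate on `[a,b)`, normalized so that the midpoint gets value 1. -/
noncomputable def Theta (A : UCA) (a b x : ℝ) : ℝ :=
  if x ≤ a then 0
  else A.theta a ((max x ((a + b) / 2) + b) / 2) x /
      A.theta a ((max x ((a + b) / 2) + b) / 2) ((a + b) / 2)

lemma cpt_mem (hab : A.Delta a b) : (a + b) / 2 ∈ Set.Ioo a b := by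
  have := hab.2.2.1
  constructor <;> [linarith; linarith]

lemma Yof_mem (hab : A.Delta a b) {w : ℝ} (hw : w ∈ Set.Ico a b) :
    (max w ((a + b) / 2) + b) / 2 ∈ Set.Ioo a b ∧
    w < (max w ((a + b) / 2) + b) / 2 ∧
    (a + b) / 2 < (max w ((a + b) / 2) + b) / 2 := by
  have hlt : a < b := hab.2.2.1
  have h1 : max w ((a + b) / 2) < b := max_lt hw.2 (by linarith)
  have h2 : a < max w ((a + b) / 2) := lt_of_lt_of_le (by linarith)
    (le_max_right _ _)
  refine ⟨⟨by linarith, by linarith⟩, ?_, ?_⟩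
  · have := le_max_left w ((a + b) / 2)
    linarith
  · have := le_max_right w ((a + b) / 2)
    linarith

lemma ratio_indep_step (hMO : A.MO) (hUC : A.UC) (hLC : A.LC) (hab : A.Delta a b)
    {x y y' : ℝ} (hy : y ∈ Set.Ioo a b) (hy' : y' ∈ Set.Ioo a b) (hyy' : y < y')
    (hxy : x ∈ Set.Ioo a y) (hcy : (a + b) / 2 < y) :
    A.theta a y x / A.theta a y ((a + b) / 2) =
    A.theta a y' x / A.theta a y' ((a + b) / 2) := by
  have hc := A.cpt_mem hab
  have hr := (A.theta_spec hMO hUC hLC hab hy' ⟨hy.1, hyy'⟩).1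
  rw [A.theta_compat hMO hUC hLC hab hy hy' hyy' hxy,
    A.theta_compat hMO hUC hLC hab hy hy' hyy' ⟨hc.1, hcy⟩]
  rw [mul_div_mul_left _ _ (ne_of_gt hr.1)]

lemma ratio_indep (hMO : A.MO) (hUC : A.UC) (hLC : A.LC) (hab : A.Delta a b)
    {x y y' : ℝ} (hy : y ∈ Set.Ioo a b) (hy' : y' ∈ Set.Ioo a b)
    (hxy : x ∈ Set.Ioo a y) (hcy : (a + b) / 2 < y)
    (hxy' : x ∈ Set.Ioo a y') (hcy' : (a + b) / 2 < y') :
    A.theta a y x / A.theta a y ((a + b) / 2) =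
    A.theta a y' x / A.theta a y' ((a + b) / 2) := by
  rcases lt_trichotomy y y' with h | h | h
  · exact A.ratio_indep_step hMO hUC hLC hab hy hy' h hxy hcy
  · rw [h]
  · exact (A.ratio_indep_step hMO hUC hLC hab hy' hy h hxy' hcy').symm

lemma Theta_val (hMO : A.MO) (hUC : A.UC) (hLC : A.LC) (hab : A.Delta a b)
    {x y : ℝ} (hx : x ∈ Set.Ioo a b) (hy : y ∈ Set.Ioo a b)
    (hxy : x < y) (hcy : (a + b) / 2 < y) :
    A.Theta a b x = A.theta a y x / A.theta a y ((a + b) / 2) := by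
  obtain ⟨hY, hxY, hcY⟩ := A.Yof_mem hab (w := x) ⟨hx.1.le, hx.2⟩
  rw [UCA.Theta, if_neg (not_le.mpr hx.1)]
  exact A.ratio_indep hMO hUC hLC hab hY hy ⟨hx.1, hxY⟩ hcY ⟨hx.1, hxy⟩ hcy

lemma Theta_a : A.Theta a b a = 0 := if_pos (le_refl a)

lemma Theta_pos (hMO : A.MO) (hUC : A.UC) (hLC : A.LC) (hab : A.Delta a b)
    {x : ℝ} (hx : x ∈ Set.Ioo a b) : 0 < A.Theta a b x := by
  obtain ⟨hY, hxY, hcY⟩ := A.Yof_mem hab (w := x) ⟨hx.1.le, hx.2⟩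
  rw [A.Theta_val hMO hUC hLC hab hx hY hxY hcY]
  have h1 := (A.theta_spec hMO hUC hLC hab hY ⟨hx.1, hxY⟩).1
  have h2 := (A.theta_spec hMO hUC hLC hab hY ⟨(A.cpt_mem hab).1, hcY⟩).1
  exact div_pos h1.1 h2.1

lemma Theta_c (hMO : A.MO) (hUC : A.UC) (hLC : A.LC) (hab : A.Delta a b) :
    A.Theta a b ((a + b) / 2) = 1 := by
  have hc := A.cpt_mem hab
  obtain ⟨hY, hxY, hcY⟩ := A.Yof_mem hab (w := (a + b) / 2) ⟨hc.1.le, hc.2⟩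
  rw [A.Theta_val hMO hUC hLC hab hc hY hxY hcY]
  have h2 := (A.theta_spec hMO hUC hLC hab hY ⟨hc.1, hcY⟩).1
  exact div_self (ne_of_gt h2.1)

lemma Theta_scale (hMO : A.MO) (hUC : A.UC) (hLC : A.LC) (hab : A.Delta a b)
    {x p : ℝ} (hx : x ∈ Set.Ioo a b) (hp : p ∈ Set.Ioo (0:ℝ) 1) :
    A.Theta a b (A.op p x a) = p * A.Theta a b x := by
  obtain ⟨hY, hxY, hcY⟩ := A.Yof_mem hab (w := x) ⟨hx.1.le, hx.2⟩
  have hz := A.op_mem_gap hMO hUC hLC hab hx hp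
  have hzx : A.op p x a < x := A.claimA hMO hUC hLC hab hx hp
  rw [A.Theta_val hMO hUC hLC hab hz hY (lt_trans hzx hxY) hcY,
    A.Theta_val hMO hUC hLC hab hx hY hxY hcY,
    A.theta_scale hMO hUC hLC hab hY ⟨hx.1, hxY⟩ hp]
  ring

lemma Theta_med (hMO : A.MO) (hUC : A.UC) (hLC : A.LC) (hab : A.Delta a b)
    {x x' p : ℝ} (hx : x ∈ Set.Ioo a b) (hx' : x' ∈ Set.Ioo a b)
    (hp : p ∈ Set.Ioo (0:ℝ) 1) :
    A.Theta a b (A.op p x x') = p * A.Theta a b x + (1 - p) * A.Theta a b x' := by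
  have ha : a ∈ Set.Icc (0:ℝ) 1 := hab.1.1
  have hxm : x ∈ Set.Icc (0:ℝ) 1 := A.gapIcc hab ⟨hx.1.le, hx.2⟩
  have hx'm : x' ∈ Set.Icc (0:ℝ) 1 := A.gapIcc hab ⟨hx'.1.le, hx'.2⟩
  have hw : max x x' ∈ Set.Ico a b :=
    ⟨hx.1.le.trans (le_max_left _ _), max_lt hx.2 hx'.2⟩
  obtain ⟨hY, hxY, hcY⟩ := A.Yof_mem hab hw
  have hxY' : x < (max (max x x') ((a + b) / 2) + b) / 2 :=
    lt_of_le_of_lt (le_max_left x x') hxY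
  have hx'Y : x' < (max (max x x') ((a + b) / 2) + b) / 2 :=
    lt_of_le_of_lt (le_max_right x x') hxY
  have hz : A.op p x x' ∈ Set.Ioo a b := by
    constructor
    · refine lt_of_lt_of_le ?_ (A.min_le_op hMO hp hxm hx'm)
      exact lt_min hx.1 hx'.1
    · refine lt_of_le_of_lt (A.op_le_max hMO hp hxm hx'm) hw.2
  have hzY : A.op p x x' < (max (max x x') ((a + b) / 2) + b) / 2 :=
    lt_of_le_of_lt (A.op_le_max hMO hp hxm hx'm) hxY
  rw [A.Theta_val hMO hUC hLC hab hz hY hzY hcY,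
    A.Theta_val hMO hUC hLC hab hx hY hxY' hcY,
    A.Theta_val hMO hUC hLC hab hx' hY hx'Y hcY,
    A.theta_med hMO hUC hLC hab hY ⟨hx.1, hxY'⟩ ⟨hx'.1, hx'Y⟩ hp]
  ring

lemma Theta_hom (hMO : A.MO) (hUC : A.UC) (hLC : A.LC) (hab : A.Delta a b)
    {x x' p : ℝ} (hx : x ∈ Set.Ico a b) (hx' : x' ∈ Set.Ico a b)
    (hp : p ∈ Set.Ioo (0:ℝ) 1) :
    A.Theta a b (A.op p x x') = p * A.Theta a b x + (1 - p) * A.Theta a b x' := by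
  have ha : a ∈ Set.Icc (0:ℝ) 1 := hab.1.1
  have hxm : x ∈ Set.Icc (0:ℝ) 1 := A.gapIcc hab hx
  have hx'm : x' ∈ Set.Icc (0:ℝ) 1 := A.gapIcc hab hx'
  rcases eq_or_lt_of_le hx.1 with hxa | hxa
  · rcases eq_or_lt_of_le hx'.1 with hx'a | hx'a
    · rw [← hxa, ← hx'a, A.idem p hp a ha, A.Theta_a]
      ring
    · have h1p : 1 - p ∈ Set.Ioo (0:ℝ) 1 := ⟨by linarith [hp.2], by linarith [hp.1]⟩
      rw [← hxa, A.comm p hp a ha x' hx'm,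
        A.Theta_scale hMO hUC hLC hab ⟨hx'a, hx'.2⟩ h1p, A.Theta_a]
      ring
  · rcases eq_or_lt_of_le hx'.1 with hx'a | hx'a
    · rw [← hx'a, A.Theta_scale hMO hUC hLC hab ⟨hxa, hx.2⟩ hp, A.Theta_a]
      ring
    · exact A.Theta_med hMO hUC hLC hab ⟨hxa, hx.2⟩ ⟨hx'a, hx'.2⟩ hp

lemma Theta_smono (hMO : A.MO) (hUC : A.UC) (hLC : A.LC) (hab : A.Delta a b) :
    StrictMonoOn (A.Theta a b) (Set.Ico a b) := by
  intro x hx x' hx' hxx'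
  have hx'I : x' ∈ Set.Ioo a b := ⟨lt_of_le_of_lt hx.1 hxx', hx'.2⟩
  rcases eq_or_lt_of_le hx.1 with hxa | hxa
  · rw [← hxa, A.Theta_a]
    exact A.Theta_pos hMO hUC hLC hab hx'I
  · obtain ⟨hY, hxY, hcY⟩ := A.Yof_mem hab (w := x') ⟨hx'I.1.le, hx'I.2⟩
    rw [A.Theta_val hMO hUC hLC hab ⟨hxa, hx.2⟩ hY (lt_trans hxx' hxY) hcY,
      A.Theta_val hMO hUC hLC hab hx'I hY hxY hcY]
    have hden := (A.theta_spec hMO hUC hLC hab hY ⟨(A.cpt_mem hab).1, hcY⟩).1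
    have hnum := A.theta_mono hMO hUC hLC hab hY ⟨hxa, lt_trans hxx' hxY⟩
      ⟨hx'I.1, hxY⟩ hxx'
    exact div_lt_div_of_pos_right hnum hden.1

lemma Theta_nonneg (hMO : A.MO) (hUC : A.UC) (hLC : A.LC) (hab : A.Delta a b)
    {x : ℝ} (hx : x ∈ Set.Ico a b) : 0 ≤ A.Theta a b x := by
  rcases eq_or_lt_of_le hx.1 with hxa | hxa
  · rw [← hxa, A.Theta_a]
  · exact (A.Theta_pos hMO hUC hLC hab ⟨hxa, hx.2⟩).le

end UCA

end BigTheta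
section Helpers

open Set Filter Topology

lemma tauSet_one : tauSet 1 = Set.Ico (0:ℝ) 1 := by
  ext t
  simp only [tauSet, Set.mem_setOf_eq, Set.mem_Ico]
  constructor
  · rintro ⟨h0, h1⟩
    refine ⟨h0, ?_⟩
    by_contra hcon
    push_neg at hcon
    have : (1:ENNReal) ≤ ENNReal.ofReal t := by
      rw [← ENNReal.ofReal_one]
      exact ENNReal.ofReal_le_ofReal hcon
    exact absurd h1 (not_lt.mpr this)
  · rintro ⟨h0, h1⟩
    refine ⟨h0, ?_⟩
    rw [← ENNReal.ofReal_one]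
    exact ENNReal.ofReal_lt_ofReal_iff_of_nonneg h0 |>.mpr h1
lemma tauSet_top : tauSet ⊤ = Set.Ici (0:ℝ) := by
  ext t
  simp only [tauSet, Set.mem_setOf_eq, Set.mem_Ici]
  exact ⟨fun h => h.1, fun h => ⟨h, ENNReal.ofReal_lt_top⟩⟩

lemma affine_of_hom {G : ℝ → ℝ} {D : Set ℝ}
    (hD : D = Set.Ico (0:ℝ) 1 ∨ D = Set.Ici (0:ℝ))
    (hhom : ∀ p ∈ Set.Ioo (0:ℝ) 1, ∀ s ∈ D, ∀ t ∈ D,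
      G (p * s + (1 - p) * t) = p * G s + (1 - p) * G t) :
    ∀ s ∈ D, G s = G 0 + 2 * (G (1/2) - G 0) * s := by
  have h0D : (0:ℝ) ∈ D := by
    rcases hD with rfl | rfl
    · exact ⟨le_refl 0, zero_lt_one⟩
    · exact Set.mem_Ici.mpr (le_refl 0)
  have hhD : (1/2:ℝ) ∈ D := by
    rcases hD with rfl | rfl
    · exact ⟨by norm_num, by norm_num⟩
    · norm_num
  have hDpos : ∀ s ∈ D, 0 ≤ s := by
    intro s hs
    rcases hD with rfl | rfl
    · exact hs.1
    · exact hs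
  have key : ∀ s t : ℝ, 0 < s → s < t → t ∈ D → G s - G 0 = s / t * (G t - G 0) := by
    intro s t hs hst htD
    have hp : s / t ∈ Set.Ioo (0:ℝ) 1 := by
      constructor
      · exact div_pos hs (lt_trans hs hst)
      · rw [div_lt_one (lt_trans hs hst)]; exact hst
    have h := hhom (s / t) hp t htD 0 h0D
    have e : s / t * t + (1 - s / t) * 0 = s := by
      have ht0 : t ≠ 0 := ne_of_gt (lt_trans hs hst)
      field_simp
      ring
    rw [e] at h
    rw [h]
    ring
  intro s hsD
  rcases eq_or_lt_of_le (hDpos s hsD) with h0 | h0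
  · rw [← h0]; ring
  · obtain ⟨t, htD, hst, hht⟩ : ∃ t, t ∈ D ∧ s < t ∧ (1/2:ℝ) < t := by
      rcases hD with rfl | rfl
      · refine ⟨(max s (1/2) + 1) / 2, ⟨?_, ?_⟩, ?_, ?_⟩
        · positivity
        · have h1 : max s (1/2) < 1 := max_lt hsD.2 (by norm_num)
          linarith
        · have := le_max_left s (1/2:ℝ)
          have h1 : max s (1/2) < 1 := max_lt hsD.2 (by norm_num)
          linarith
        · have := le_max_right s (1/2:ℝ)
          have h1 : max s (1/2) < 1 := max_lt hsD.2 (by norm_num)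
          linarith
      · refine ⟨max s (1/2) + 1, ?_, ?_, ?_⟩
        · have := le_max_left s (1/2:ℝ)
          simp only [Set.mem_Ici]
          linarith [hDpos s hsD]
        · have := le_max_left s (1/2:ℝ)
          linarith
        · have := le_max_right s (1/2:ℝ)
          linarith
    have ht0 : (0:ℝ) < t := lt_trans (by norm_num) hht
    have h1 := key s t h0 hst htD
    have h2 := key (1/2) t (by norm_num) hht htD
    have h3 : 2 * (G (1/2) - G 0) * s = s / t * (G t - G 0) := by
      rw [h2]
      field_simp
    rw [h3, ← h1]
    ring

namespace UCA

variable (A : UCA) {a b : ℝ}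

lemma Theta_down (hMO : A.MO) (hUC : A.UC) (hLC : A.LC) (hab : A.Delta a b)
    {x r' : ℝ} (hx : x ∈ Set.Ico a b) (h0 : 0 ≤ r') (hr : r' < A.Theta a b x) :
    ∃ x' ∈ Set.Ico a b, A.Theta a b x' = r' := by
  rcases eq_or_lt_of_le h0 with h | h
  · exact ⟨a, ⟨le_refl a, hab.2.2.1⟩, by rw [A.Theta_a, ← h]⟩
  · have hxa : a < x := by
      rcases eq_or_lt_of_le hx.1 with h1 | h1
      · exfalso
        rw [← h1, A.Theta_a] at hr
        linarith
      · exact h1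
    have hΘpos : 0 < A.Theta a b x := lt_trans h hr
    have hp : r' / A.Theta a b x ∈ Set.Ioo (0:ℝ) 1 :=
      ⟨div_pos h hΘpos, (div_lt_one hΘpos).mpr hr⟩
    have hz := A.op_mem_gap hMO hUC hLC hab ⟨hxa, hx.2⟩ hp
    refine ⟨A.op (r' / A.Theta a b x) x a, ⟨hz.1.le, hz.2⟩, ?_⟩
    rw [A.Theta_scale hMO hUC hLC hab ⟨hxa, hx.2⟩ hp]
    field_simp

lemma Theta_up (hMO : A.MO) (hUC : A.UC) (hLC : A.LC) (hab : A.Delta a b)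
    {x : ℝ} (hx : x ∈ Set.Ico a b) :
    ∃ x' ∈ Set.Ico a b, A.Theta a b x < A.Theta a b x' := by
  refine ⟨(x + b) / 2, ⟨?_, ?_⟩, ?_⟩
  · have := hx.1
    have := hx.2
    linarith
  · have := hx.2
    linarith
  · have h1 : x < (x + b) / 2 := by have := hx.2; linarith
    exact A.Theta_smono hMO hUC hLC hab hx
      ⟨by have := hx.1; linarith, by have := hx.2; linarith⟩ h1

end UCA

end Helpers
section Final

open Set Filter Topology

namespace UCA

variable (A : UCA) {a b : ℝ}

lemma iso_analysis (hMO : A.MO) (hUC : A.UC) (hLC : A.LC) (hab : A.Delta a b)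
    {τ' : ENNReal} {D : Set ℝ}
    (hDval : D = Set.Ico (0:ℝ) 1 ∨ D = Set.Ici (0:ℝ)) (hτD : tauSet τ' = D)
    {Φ : ℝ → ℝ} (hΦ : A.IsTauIso a b τ' Φ) :
    0 < 2 * (A.Theta a b (Φ (1/2)) - A.Theta a b (Φ 0)) ∧
    ∀ s ∈ D, A.Theta a b (Φ s) =
      A.Theta a b (Φ 0) + 2 * (A.Theta a b (Φ (1/2)) - A.Theta a b (Φ 0)) * s := by
  have h0D : (0:ℝ) ∈ D := by
    rcases hDval with rfl | rfl
    · exact ⟨le_refl 0, zero_lt_one⟩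
    · exact Set.mem_Ici.mpr (le_refl 0)
  have hhD : (1/2:ℝ) ∈ D := by
    rcases hDval with rfl | rfl
    · exact ⟨by norm_num, by norm_num⟩
    · simp only [Set.mem_Ici]; norm_num
  have hDpos : ∀ s ∈ D, 0 ≤ s := by
    intro s hs
    rcases hDval with rfl | rfl
    · exact hs.1
    · exact hs
  have hmaps : ∀ s ∈ D, Φ s ∈ Set.Ico a b := by
    intro s hs
    exact hΦ.1.1 (by rw [hτD]; exact hs)
  have hhom : ∀ p ∈ Set.Ioo (0:ℝ) 1, ∀ s ∈ D, ∀ t ∈ D,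
      A.Theta a b (Φ (p * s + (1 - p) * t)) =
      p * A.Theta a b (Φ s) + (1 - p) * A.Theta a b (Φ t) := by
    intro p hp s hs t ht
    rw [hΦ.2 p hp s (by rw [hτD]; exact hs) t (by rw [hτD]; exact ht)]
    exact A.Theta_hom hMO hUC hLC hab (hmaps s hs) (hmaps t ht) hp
  have haff := affine_of_hom (G := fun s => A.Theta a b (Φ s)) hDval hhom
  set κ := 2 * (A.Theta a b (Φ (1/2)) - A.Theta a b (Φ 0)) with hκdef
  refine ⟨?_, haff⟩
  -- κ ≠ 0 : injectivity
  have hGinj : ∀ s ∈ D, ∀ t ∈ D, A.Theta a b (Φ s) = A.Theta a b (Φ t) → s = t := by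
    intro s hs t ht h
    have h2 : Φ s = Φ t :=
      (A.Theta_smono hMO hUC hLC hab).injOn (hmaps s hs) (hmaps t ht) h
    exact hΦ.1.2.1 (by rw [hτD]; exact hs) (by rw [hτD]; exact ht) h2
  have hκ0 : κ ≠ 0 := by
    intro hcon
    have h1 := haff (1/2) hhD
    rw [hcon] at h1
    simp only [zero_mul, add_zero] at h1
    have := hGinj (1/2) hhD 0 h0D h1
    norm_num at this
  rcases lt_or_gt_of_ne hκ0 with hneg | hpos
  · exfalso
    obtain ⟨x', hx', hgt⟩ := A.Theta_up hMO hUC hLC hab (hmaps 0 h0D)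
    obtain ⟨s', hs'D, hs'⟩ : ∃ s' ∈ D, Φ s' = x' := by
      obtain ⟨s', hs', he⟩ := hΦ.1.2.2 hx'
      exact ⟨s', by rw [← hτD]; exact hs', he⟩
    have h1 := haff s' hs'D
    rw [hs'] at h1
    have h2 : κ * s' ≤ 0 :=
      mul_nonpos_of_nonpos_of_nonneg hneg.le (hDpos s' hs'D)
    linarith
  · exact hpos

lemma iso_smono (hMO : A.MO) (hUC : A.UC) (hLC : A.LC) (hab : A.Delta a b)
    {τ' : ENNReal} {D : Set ℝ}
    (hDval : D = Set.Ico (0:ℝ) 1 ∨ D = Set.Ici (0:ℝ)) (hτD : tauSet τ' = D)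
    {Φ : ℝ → ℝ} (hΦ : A.IsTauIso a b τ' Φ) : StrictMonoOn Φ (tauSet τ') := by
  obtain ⟨hκ, haff⟩ := A.iso_analysis hMO hUC hLC hab hDval hτD hΦ
  intro s hs t ht hst
  rw [hτD] at hs ht
  have h1 := haff s hs
  have h2 := haff t ht
  have hG : A.Theta a b (Φ s) < A.Theta a b (Φ t) := by
    rw [h1, h2]
    have := mul_lt_mul_of_pos_left hst hκ
    linarith
  have hms : Φ s ∈ Set.Ico a b := hΦ.1.1 (by rw [hτD]; exact hs)
  have hmt : Φ t ∈ Set.Ico a b := hΦ.1.1 (by rw [hτD]; exact ht)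
  rcases lt_trichotomy (Φ s) (Φ t) with h | h | h
  · exact h
  · exfalso; rw [h] at hG; linarith
  · exfalso
    have := A.Theta_smono hMO hUC hLC hab hmt hms h
    linarith

end UCA

end Final
section Main

open Set Filter Topology

/-- Theorem 3.7(ii): let `⟨[0,1], ⊕_p⟩` be a convex algebra satisfying (MO), (UC), (LC)
and `(a,b) ∈ Δ^⊕`.  Then there is a unique `τ ∈ {1, ∞}` such that `[a,b)` is closed
under the operations `⊕_p` and `⟨[a,b), ⊕_p⟩` is isomorphic to `⟨[0,τ), +_p⟩`.
Moreover every such isomorphism is strictly increasing, and for `τ = 1` the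
isomorphism is unique. -/
theorem stmt_16 (A : UCA) (hMO : A.MO) (hUC : A.UC) (hLC : A.LC)
    (a b : ℝ) (hab : A.Delta a b) :
    ∃ τ ∈ ({1, ⊤} : Set ENNReal),
      ((∀ p ∈ Set.Ioo (0:ℝ) 1, ∀ x ∈ Set.Ico a b, ∀ y ∈ Set.Ico a b,
          A.op p x y ∈ Set.Ico a b) ∧
        ∃ Φ : ℝ → ℝ, A.IsTauIso a b τ Φ) ∧
      (∀ τ' ∈ ({1, ⊤} : Set ENNReal), (∃ Φ : ℝ → ℝ, A.IsTauIso a b τ' Φ) → τ' = τ) ∧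
      (∀ Φ : ℝ → ℝ, A.IsTauIso a b τ Φ → StrictMonoOn Φ (tauSet τ)) ∧
      (τ = 1 → ∀ Φ Φ' : ℝ → ℝ, A.IsTauIso a b 1 Φ → A.IsTauIso a b 1 Φ' →
        Set.EqOn Φ Φ' (tauSet 1)) := by
  classical
  have hc := A.cpt_mem hab
  have hΘs := A.Theta_smono hMO hUC hLC hab
  have hInj := hΘs.injOn
  set R := A.Theta a b '' Set.Ico a b with hRdef
  have haIco : a ∈ Set.Ico a b := ⟨le_refl a, hab.2.2.1⟩
  have h0R : (0:ℝ) ∈ R := ⟨a, haIco, A.Theta_a⟩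
  have h1R : (1:ℝ) ∈ R := ⟨(a + b) / 2, ⟨hc.1.le, hc.2⟩, A.Theta_c hMO hUC hLC hab⟩
  have hRpos : ∀ r ∈ R, 0 ≤ r := by
    rintro r ⟨x, hx, rfl⟩
    exact A.Theta_nonneg hMO hUC hLC hab hx
  have hclosure : ∀ p ∈ Set.Ioo (0:ℝ) 1, ∀ x ∈ Set.Ico a b, ∀ y ∈ Set.Ico a b,
      A.op p x y ∈ Set.Ico a b := by
    intro p hp x hx y hy
    have hxm := A.gapIcc hab hx
    have hym := A.gapIcc hab hy
    constructor
    · exact le_trans (le_min hx.1 hy.1) (A.min_le_op hMO hp hxm hym)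
    · exact lt_of_le_of_lt (A.op_le_max hMO hp hxm hym) (max_lt hx.2 hy.2)
  set Φ0 := Function.invFunOn (A.Theta a b) (Set.Ico a b) with hΦ0def
  have hbijΘ : Set.BijOn (A.Theta a b) (Set.Ico a b) R := hInj.bijOn_image
  have hinv : Set.InvOn Φ0 (A.Theta a b) (Set.Ico a b) R := hbijΘ.invOn_invFunOn
  have hΦ0maps : ∀ r ∈ R, Φ0 r ∈ Set.Ico a b := by
    rintro r ⟨x, hx, rfl⟩
    rw [hinv.1 hx]
    exact hx
  by_cases hBdd : BddAbove R
  · -- bounded case : τ = 1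
    set T := sSup R with hTdef
    have hT1 : (1:ℝ) ≤ T := le_csSup hBdd h1R
    have hTpos : (0:ℝ) < T := lt_of_lt_of_le zero_lt_one hT1
    have hRne : R.Nonempty := ⟨0, h0R⟩
    have hReq : R = Set.Ico 0 T := by
      ext r
      constructor
      · intro hr
        refine ⟨hRpos r hr, ?_⟩
        rcases eq_or_lt_of_le (le_csSup hBdd hr) with h | h
        · exfalso
          obtain ⟨x, hx, rfl⟩ := hr
          obtain ⟨x', hx', hgt⟩ := A.Theta_up hMO hUC hLC hab hx
          have hle : A.Theta a b x' ≤ T := le_csSup hBdd ⟨x', hx', rfl⟩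
          rw [h] at hgt
          linarith
        · exact h
      · rintro ⟨h0r, hrT⟩
        obtain ⟨r'', hr''R, hgt⟩ := exists_lt_of_lt_csSup hRne hrT
        obtain ⟨x, hx, rfl⟩ := hr''R
        exact A.Theta_down hMO hUC hLC hab hx h0r hgt
    -- the canonical isomorphism for τ = 1
    have hmemR : ∀ s ∈ Set.Ico (0:ℝ) 1, T * s ∈ R := by
      intro s hs
      rw [hReq]
      exact ⟨mul_nonneg hTpos.le hs.1, by nlinarith [hs.1, hs.2]⟩
    have hkey : ∀ Ψ : ℝ → ℝ, A.IsTauIso a b 1 Ψ →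
        ∀ s ∈ Set.Ico (0:ℝ) 1, A.Theta a b (Ψ s) = T * s := by
      intro Ψ hΨ
      obtain ⟨hκ, haff⟩ := A.iso_analysis hMO hUC hLC hab (Or.inl rfl) tauSet_one hΨ
      set G0 := A.Theta a b (Ψ 0) with hG0def
      set κ := 2 * (A.Theta a b (Ψ (1/2)) - G0) with hκdef
      have h0D : (0:ℝ) ∈ Set.Ico (0:ℝ) 1 := ⟨le_refl 0, zero_lt_one⟩
      have hmaps : ∀ s ∈ Set.Ico (0:ℝ) 1, Ψ s ∈ Set.Ico a b := by
        intro s hs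
        exact hΨ.1.1 (by rw [tauSet_one]; exact hs)
      have hG0R : G0 ∈ R := ⟨Ψ 0, hmaps 0 h0D, rfl⟩
      have hG0pos : 0 ≤ G0 := hRpos _ hG0R
      obtain ⟨s0, hs0, hΨs0⟩ : ∃ s0 ∈ Set.Ico (0:ℝ) 1, Ψ s0 = a := by
        obtain ⟨s0, hs0, he⟩ := hΨ.1.2.2 haIco
        exact ⟨s0, by rw [← tauSet_one]; exact hs0, he⟩
      have hG00 : G0 = 0 := by
        have h1 := haff s0 hs0
        rw [hΨs0, A.Theta_a] at h1
        have h2 : 0 ≤ κ * s0 := mul_nonneg hκ.le hs0.1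
        linarith
      have hκT : κ = T := by
        have hub : ∀ s ∈ Set.Ico (0:ℝ) 1, κ * s < T := by
          intro s hs
          have h1 := haff s hs
          have h2 : A.Theta a b (Ψ s) ∈ R := ⟨Ψ s, hmaps s hs, rfl⟩
          rw [hReq] at h2
          rw [hG00] at h1
          rw [h1] at h2
          simpa using h2.2
        have hle : κ ≤ T := by
          by_contra hcon
          push_neg at hcon
          have hs : (T / κ + 1) / 2 ∈ Set.Ico (0:ℝ) 1 := by
            constructor
            · positivity
            · have : T / κ < 1 := (div_lt_one hκ).mpr hcon
              linarith
          have := hub _ hs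
          have hTκ : T / κ * κ = T := div_mul_cancel₀ _ (ne_of_gt hκ)
          nlinarith [(div_lt_one hκ).mpr hcon, hκ]
        rcases eq_or_lt_of_le hle with h | h
        · exact h
        · exfalso
          have hr : (κ + T) / 2 ∈ R := by
            rw [hReq]
            constructor
            · positivity
            · linarith
          obtain ⟨x, hx, hxe⟩ := hr
          obtain ⟨s, hsD, hse⟩ : ∃ s ∈ Set.Ico (0:ℝ) 1, Ψ s = x := by
            obtain ⟨s, hs, he⟩ := hΨ.1.2.2 hx
            exact ⟨s, by rw [← tauSet_one]; exact hs, he⟩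
          have h1 := haff s hsD
          rw [hse, hxe, hG00] at h1
          have : κ * s < κ := by
            nlinarith [hsD.2, hsD.1, hκ]
          linarith
      intro s hs
      rw [haff s hs, hG00, hκT]
      ring
    refine ⟨1, Set.mem_insert 1 _, ⟨hclosure, ⟨fun s => Φ0 (T * s), ?_, ?_⟩⟩, ?_, ?_, ?_⟩
    · -- BijOn
      rw [tauSet_one]
      refine ⟨?_, ?_, ?_⟩
      · intro s hs
        exact hΦ0maps _ (hmemR s hs)
      · intro s hs t ht h
        have h' : Φ0 (T * s) = Φ0 (T * t) := h
        have h1 : T * s = T * t := by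
          have e1 := hinv.2 (hmemR s hs)
          have e2 := hinv.2 (hmemR t ht)
          rw [← e1, ← e2, h']
        exact mul_left_cancel₀ (ne_of_gt hTpos) h1
      · intro x hx
        have hΘx : A.Theta a b x ∈ R := ⟨x, hx, rfl⟩
        have hΘx' : A.Theta a b x ∈ Set.Ico 0 T := by rwa [← hReq]
        refine ⟨A.Theta a b x / T, ⟨div_nonneg hΘx'.1 hTpos.le,
          (div_lt_one hTpos).mpr hΘx'.2⟩, ?_⟩
        have e : T * (A.Theta a b x / T) = A.Theta a b x := by
          field_simp
        simp only [e]
        exact hinv.1 hx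
    · -- homomorphism
      intro p hp s hs t ht
      rw [tauSet_one] at hs ht
      have harg : p * s + (1 - p) * t ∈ Set.Ico (0:ℝ) 1 := by
        constructor
        · have := mul_nonneg hp.1.le hs.1
          have := mul_nonneg (by linarith [hp.2] : (0:ℝ) ≤ 1 - p) ht.1
          linarith
        · nlinarith [hp.1, hp.2, hs.2, ht.2, hs.1, ht.1]
      have hm1 := hΦ0maps _ (hmemR s hs)
      have hm2 := hΦ0maps _ (hmemR t ht)
      have hm3 := hΦ0maps _ (hmemR _ harg)
      apply hInj hm3 (hclosure p hp _ hm1 _ hm2)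
      rw [hinv.2 (hmemR _ harg),
        A.Theta_hom hMO hUC hLC hab hm1 hm2 hp,
        hinv.2 (hmemR s hs), hinv.2 (hmemR t ht)]
      ring
    · -- uniqueness of τ
      intro τ' hτ' hex
      rcases Set.mem_insert_iff.mp hτ' with h | h
      · exact h
      · exfalso
        rw [Set.mem_singleton_iff] at h
        subst h
        obtain ⟨Φ', hΦ'⟩ := hex
        obtain ⟨hκ, haff⟩ := A.iso_analysis hMO hUC hLC hab (Or.inr rfl) tauSet_top hΦ'
        set G0 := A.Theta a b (Φ' 0) with hG0def
        set κ := 2 * (A.Theta a b (Φ' (1/2)) - G0) with hκdef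
        have hmaps : ∀ s ∈ Set.Ici (0:ℝ), Φ' s ∈ Set.Ico a b := by
          intro s hs
          exact hΦ'.1.1 (by rw [tauSet_top]; exact hs)
        have hG0R : G0 ∈ R := ⟨Φ' 0, hmaps 0 (Set.mem_Ici.mpr (le_refl 0)), rfl⟩
        have hG0T : G0 ≤ T := le_csSup hBdd hG0R
        set s := (T - G0 + 1) / κ with hsdef
        have hs : s ∈ Set.Ici (0:ℝ) := by
          rw [Set.mem_Ici, hsdef]
          apply div_nonneg _ hκ.le
          linarith
        have h1 := haff s hs
        have e : κ * s = T - G0 + 1 := by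
          rw [hsdef]
          field_simp
        rw [e] at h1
        have h2 : A.Theta a b (Φ' s) ∈ R := ⟨Φ' s, hmaps s hs, rfl⟩
        have h3 : A.Theta a b (Φ' s) ≤ T := le_csSup hBdd h2
        linarith
    · -- strict monotonicity
      intro Φ hΦ
      exact A.iso_smono hMO hUC hLC hab (Or.inl rfl) tauSet_one hΦ
    · -- uniqueness of the isomorphism
      intro _ Φ Φ' hΦ hΦ'
      intro s hs
      rw [tauSet_one] at hs
      have h1 := hkey Φ hΦ s hs
      have h2 := hkey Φ' hΦ' s hs
      have hm1 : Φ s ∈ Set.Ico a b := hΦ.1.1 (by rw [tauSet_one]; exact hs)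
      have hm2 : Φ' s ∈ Set.Ico a b := hΦ'.1.1 (by rw [tauSet_one]; exact hs)
      exact hInj hm1 hm2 (h1.trans h2.symm)
  · -- unbounded case : τ = ⊤
    have hReq : R = Set.Ici 0 := by
      ext r
      constructor
      · intro hr
        exact Set.mem_Ici.mpr (hRpos r hr)
      · intro hr
        rw [Set.mem_Ici] at hr
        obtain ⟨r'', hr''R, hgt⟩ := not_bddAbove_iff.mp hBdd r
        obtain ⟨x, hx, rfl⟩ := hr''R
        exact A.Theta_down hMO hUC hLC hab hx hr hgt
    have hmemR : ∀ s ∈ Set.Ici (0:ℝ), s ∈ R := by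
      intro s hs
      rw [hReq]
      exact hs
    refine ⟨⊤, Set.mem_insert_iff.mpr (Or.inr rfl),
      ⟨hclosure, ⟨Φ0, ?_, ?_⟩⟩, ?_, ?_, ?_⟩
    · -- BijOn
      rw [tauSet_top]
      refine ⟨?_, ?_, ?_⟩
      · intro s hs
        exact hΦ0maps _ (hmemR s hs)
      · intro s hs t ht h
        have e1 := hinv.2 (hmemR s hs)
        have e2 := hinv.2 (hmemR t ht)
        rw [← e1, ← e2, h]
      · intro x hx
        have hΘx : A.Theta a b x ∈ R := ⟨x, hx, rfl⟩
        refine ⟨A.Theta a b x, ?_, hinv.1 hx⟩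
        rw [← hReq]
        exact hΘx
    · -- homomorphism
      intro p hp s hs t ht
      rw [tauSet_top] at hs ht
      have harg : p * s + (1 - p) * t ∈ Set.Ici (0:ℝ) := by
        rw [Set.mem_Ici]
        have := mul_nonneg hp.1.le hs
        have := mul_nonneg (by linarith [hp.2] : (0:ℝ) ≤ 1 - p) ht
        linarith
      have hm1 := hΦ0maps _ (hmemR s hs)
      have hm2 := hΦ0maps _ (hmemR t ht)
      apply hInj (hΦ0maps _ (hmemR _ harg)) (hclosure p hp _ hm1 _ hm2)
      rw [hinv.2 (hmemR _ harg),
        A.Theta_hom hMO hUC hLC hab hm1 hm2 hp,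
        hinv.2 (hmemR s hs), hinv.2 (hmemR t ht)]
    · -- uniqueness of τ
      intro τ' hτ' hex
      rcases Set.mem_insert_iff.mp hτ' with h | h
      · exfalso
        subst h
        obtain ⟨Φ', hΦ'⟩ := hex
        obtain ⟨hκ, haff⟩ := A.iso_analysis hMO hUC hLC hab (Or.inl rfl) tauSet_one hΦ'
        set G0 := A.Theta a b (Φ' 0) with hG0def
        set κ := 2 * (A.Theta a b (Φ' (1/2)) - G0) with hκdef
        have hmaps : ∀ s ∈ Set.Ico (0:ℝ) 1, Φ' s ∈ Set.Ico a b := by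
          intro s hs
          exact hΦ'.1.1 (by rw [tauSet_one]; exact hs)
        have hG0R : G0 ∈ R := ⟨Φ' 0, hmaps 0 ⟨le_refl 0, zero_lt_one⟩, rfl⟩
        have hG0pos : 0 ≤ G0 := hRpos _ hG0R
        have hr : G0 + |κ| + 1 ∈ R := by
          rw [hReq, Set.mem_Ici]
          have := abs_nonneg κ
          linarith
        obtain ⟨x, hx, hxe⟩ := hr
        obtain ⟨s, hsD, hse⟩ : ∃ s ∈ Set.Ico (0:ℝ) 1, Φ' s = x := by
          obtain ⟨s, hs, he⟩ := hΦ'.1.2.2 hx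
          exact ⟨s, by rw [← tauSet_one]; exact hs, he⟩
        have h1 := haff s hsD
        rw [hse, hxe] at h1
        have h2 : κ * s ≤ |κ| := by
          calc κ * s ≤ |κ| * s := mul_le_mul_of_nonneg_right (le_abs_self κ) hsD.1
            _ ≤ |κ| * 1 := mul_le_mul_of_nonneg_left hsD.2.le (abs_nonneg κ)
            _ = |κ| := mul_one _
        linarith
      · rw [Set.mem_singleton_iff] at h
        exact h
    · -- strict monotonicity
      intro Φ hΦ
      exact A.iso_smono hMO hUC hLC hab (Or.inr rfl) tauSet_top hΦ
    · -- τ = 1 case is vacuous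
      intro h
      exact absurd h ENNReal.top_ne_one

end Main
end

section
/- Let E be a closed subset of [0,1] with 0 ∈ E, set Δ := { (a,b) ∈ [0,1]² : a, b ∈ E, a < b, (a,b) ∩ E = ∅ }, and let (σ_{a,b})_{(a,b)∈Δ} be any family of elements of {1, ∞}. Then there exists a convex algebra ⟨[0,1], ⊕_p⟩ satisfying (MO), (UC) and (LC) such that E^⊕ = E (and hence Δ^⊕ = Δ) and τ^⊕_{a,b} = σ_{a,b} for all (a,b) ∈ Δ. -/
open Set Filter Topology

noncomputable def bse (E : Set ℝ) (x : ℝ) : ℝ := sSup (E ∩ Set.Icc 0 x)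

noncomputable def nxt (E : Set ℝ) (m : ℝ) : ℝ := sInf (E ∩ Set.Ioi m)

open Classical in
noncomputable def gphi (E : Set ℝ) (σ : ℝ → ℝ → ENNReal) (m t : ℝ) : ℝ :=
  if (E ∩ Set.Ioi m).Nonempty then
    if σ m (nxt E m) = 1 then m + t * (nxt E m - m)
    else nxt E m - (nxt E m - m) / (1 + t)
  else m + t

open Classical in
noncomputable def gval (E : Set ℝ) (σ : ℝ → ℝ → ENNReal) (m z : ℝ) : ℝ :=
  if (E ∩ Set.Ioi m).Nonempty then
    if σ m (nxt E m) = 1 then (z - m) / (nxt E m - m)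
    else (z - m) / (nxt E m - z)
  else z - m

open Classical in
noncomputable def Sset (E : Set ℝ) (σ : ℝ → ℝ → ENNReal) (m : ℝ) : Set ℝ :=
  if (E ∩ Set.Ioi m).Nonempty then
    if σ m (nxt E m) = 1 then Set.Ico (0:ℝ) 1 else Set.Ici (0:ℝ)
  else Set.Icc 0 (1 - m)

open Classical in
noncomputable def uval (E : Set ℝ) (σ : ℝ → ℝ → ENNReal) (m x : ℝ) : ℝ :=
  if bse E x = m then gval E σ m x else 0

open Classical in
noncomputable def opE (E : Set ℝ) (σ : ℝ → ℝ → ENNReal) (p x y : ℝ) : ℝ :=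
  if p ≤ 0 then y else if 1 ≤ p then x else
  gphi E σ (max (bse E x) (bse E y))
    (p * uval E σ (max (bse E x) (bse E y)) x
      + (1 - p) * uval E σ (max (bse E x) (bse E y)) y)

section Lemmas

variable {E : Set ℝ} {σ : ℝ → ℝ → ENNReal}

lemma bse_bdd (x : ℝ) : BddAbove (E ∩ Set.Icc 0 x) := ⟨x, fun _ he => he.2.2⟩

lemma bse_mem (hcl : IsClosed E) (h0 : (0:ℝ) ∈ E) {x : ℝ} (hx : 0 ≤ x) : bse E x ∈ E :=
  ((hcl.inter isClosed_Icc).csSup_mem ⟨0, h0, le_refl 0, hx⟩ (bse_bdd x)).1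

lemma bse_le (h0 : (0:ℝ) ∈ E) {x : ℝ} (hx : 0 ≤ x) : bse E x ≤ x :=
  csSup_le ⟨0, h0, le_refl 0, hx⟩ (fun _ he => he.2.2)

lemma le_bse {e x : ℝ} (he : e ∈ E) (h1 : 0 ≤ e) (h2 : e ≤ x) : e ≤ bse E x :=
  le_csSup (bse_bdd x) ⟨he, h1, h2⟩

lemma bse_nonneg (h0 : (0:ℝ) ∈ E) {x : ℝ} (hx : 0 ≤ x) : 0 ≤ bse E x :=
  le_bse h0 le_rfl hx

lemma bse_mono (h0 : (0:ℝ) ∈ E) {x y : ℝ} (hx : 0 ≤ x) (hxy : x ≤ y) : bse E x ≤ bse E y :=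
  csSup_le_csSup (bse_bdd y) ⟨0, h0, le_refl 0, hx⟩
    (fun e he => ⟨he.1, he.2.1, he.2.2.trans hxy⟩)

lemma bse_self {x : ℝ} (h0 : (0:ℝ) ∈ E) (he : x ∈ E) (hx : 0 ≤ x) : bse E x = x :=
  le_antisymm (bse_le h0 hx) (le_bse he hx le_rfl)

lemma nxt_mem (hcl : IsClosed E) {m : ℝ} (hne : (E ∩ Set.Ioi m).Nonempty) : nxt E m ∈ E := by
  have h1 : nxt E m ∈ closure (E ∩ Set.Ioi m) :=
    csInf_mem_closure hne ⟨m, fun _ he => le_of_lt he.2⟩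
  have h2 := closure_mono (Set.inter_subset_left (s := E) (t := Set.Ioi m)) h1
  rwa [hcl.closure_eq] at h2

lemma le_nxt {m : ℝ} (hne : (E ∩ Set.Ioi m).Nonempty) : m ≤ nxt E m :=
  le_csInf hne (fun _ he => le_of_lt he.2)

lemma nxt_le {m e : ℝ} (he : e ∈ E) (hm : m < e) : nxt E m ≤ e :=
  csInf_le ⟨m, fun _ hb => le_of_lt hb.2⟩ ⟨he, hm⟩

lemma lt_nxt_of_bse (hcl : IsClosed E) (h0 : (0:ℝ) ∈ E) {m x : ℝ} (hx0 : 0 ≤ x)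
    (hb : bse E x = m) (hx : m < x) (hne : (E ∩ Set.Ioi m).Nonempty) : x < nxt E m := by
  have hm0 : 0 ≤ m := hb ▸ bse_nonneg h0 hx0
  have hsub' : ∀ e ∈ E ∩ Set.Ioi m, x ≤ e := by
    rintro e ⟨heE, hem⟩
    by_contra h; push_neg at h
    have h2 := le_bse heE (le_trans hm0 (le_of_lt hem)) h.le
    rw [hb] at h2
    exact absurd hem (not_lt.2 h2)
  have hxle : x ≤ nxt E m := le_csInf hne hsub'
  rcases eq_or_lt_of_le hxle with heq | h
  · exfalso
    have hxE : x ∈ E := heq ▸ nxt_mem hcl hne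
    have h3 := le_bse hxE hx0 le_rfl
    rw [hb] at h3
    exact absurd hx (not_lt.2 h3)
  · exact h

lemma bse_gap (hcl : IsClosed E) (h0 : (0:ℝ) ∈ E) {m z : ℝ} (hm : m ∈ E) (h0m : 0 ≤ m)
    (hmz : m ≤ z)
    (hlt : ∀ _ : (E ∩ Set.Ioi m).Nonempty, z < nxt E m) : bse E z = m := by
  refine le_antisymm (csSup_le ⟨m, hm, h0m, hmz⟩ ?_) (le_bse hm h0m hmz)
  rintro e ⟨heE, _, hez⟩
  by_contra h; push_neg at h
  have hne : (E ∩ Set.Ioi m).Nonempty := ⟨e, heE, h⟩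
  have h1 := nxt_le heE h
  have h2 := hlt hne
  linarith

lemma eq_of_bse_deg (hcl : IsClosed E) (h0 : (0:ℝ) ∈ E) {m x : ℝ} (hx0 : 0 ≤ x)
    (hne : (E ∩ Set.Ioi m).Nonempty) (hd : nxt E m = m) (hb : bse E x = m) : x = m := by
  have hmx : m ≤ x := hb ▸ bse_le h0 hx0
  rcases eq_or_lt_of_le hmx with h | h
  · exact h.symm
  · have := lt_nxt_of_bse hcl h0 hx0 hb h hne
    rw [hd] at this
    exact absurd (lt_trans h this) (lt_irrefl m)

lemma Sset_nonneg {m t : ℝ} (ht : t ∈ Sset E σ m) : 0 ≤ t := by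
  unfold Sset at ht
  split_ifs at ht with h1 h2
  · exact ht.1
  · exact ht
  · exact ht.1

lemma Sset_zero {m : ℝ} (hm1 : m ≤ 1) : (0:ℝ) ∈ Sset E σ m := by
  unfold Sset
  split_ifs with h1 h2
  · exact Set.mem_Ico.2 ⟨le_rfl, one_pos⟩
  · exact Set.mem_Ici.2 le_rfl
  · exact ⟨le_rfl, by linarith⟩

lemma Sset_combo {m p s t : ℝ} (hp : 0 ≤ p) (hp1 : p ≤ 1) (hs : s ∈ Sset E σ m)
    (ht : t ∈ Sset E σ m) : p * s + (1 - p) * t ∈ Sset E σ m := by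
  unfold Sset at hs ht ⊢
  split_ifs with h1 h2
  · rw [if_pos h1, if_pos h2] at hs ht
    constructor
    · have := mul_nonneg hp hs.1; have := mul_nonneg (by linarith : (0:ℝ) ≤ 1 - p) ht.1; linarith
    · rcases lt_or_eq_of_le hp with hp0 | hp0
      · have hA : p * s < p := by nlinarith [hs.2]
        have hB : (1 - p) * t ≤ 1 - p := by nlinarith [ht.2.le, ht.1]
        linarith
      · have hz : p = 0 := hp0.symm
        subst hz; simpa using ht.2
  · rw [if_pos h1, if_neg h2] at hs ht
    have := mul_nonneg hp hs; have := mul_nonneg (by linarith : (0:ℝ) ≤ 1 - p) ht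
    exact le_trans (by norm_num) (by linarith : (0:ℝ) ≤ p * s + (1 - p) * t)
  · rw [if_neg h1] at hs ht
    constructor
    · have := mul_nonneg hp hs.1; have := mul_nonneg (by linarith : (0:ℝ) ≤ 1 - p) ht.1; linarith
    · nlinarith [mul_le_mul_of_nonneg_left hs.2 hp,
        mul_le_mul_of_nonneg_left ht.2 (by linarith : (0:ℝ) ≤ 1 - p)]

lemma gval_self (m : ℝ) : gval E σ m m = 0 := by
  unfold gval; split_ifs <;> simp

lemma gphi_zero (m : ℝ) : gphi E σ m 0 = m := by
  unfold gphi; split_ifs <;> simp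

lemma gval_mem (hcl : IsClosed E) (h0 : (0:ℝ) ∈ E) (hsub : E ⊆ Set.Icc 0 1) {m z : ℝ}
    (hm : m ∈ E) (hz0 : 0 ≤ z) (hz1 : z ≤ 1) (hb : bse E z = m) :
    gval E σ m z ∈ Sset E σ m := by
  have hmz : m ≤ z := hb ▸ bse_le h0 hz0
  rcases eq_or_lt_of_le hmz with h | h
  · rw [← h, gval_self]
    exact Sset_zero ((hsub hm).2)
  · unfold gval Sset
    split_ifs with h1 h2
    · have hzb := lt_nxt_of_bse hcl h0 hz0 hb h h1
      exact Set.mem_Ico.2 ⟨div_nonneg (by linarith) (by linarith),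
        (div_lt_one (by linarith)).2 (by linarith)⟩
    · have hzb := lt_nxt_of_bse hcl h0 hz0 hb h h1
      exact Set.mem_Ici.2 (div_nonneg (by linarith) (by linarith))
    · exact ⟨by linarith, by linarith⟩

lemma gphi_mem (hcl : IsClosed E) (h0 : (0:ℝ) ∈ E) (hsub : E ⊆ Set.Icc 0 1) {m t : ℝ}
    (hm : m ∈ E) (ht : t ∈ Sset E σ m) :
    gphi E σ m t ∈ Set.Icc m 1 ∧ bse E (gphi E σ m t) = m ∧
      ∀ e ∈ E, m < e → gphi E σ m t < e := by
  have hm0 : 0 ≤ m := (hsub hm).1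
  have hm1 : m ≤ 1 := (hsub hm).2
  unfold gphi
  unfold Sset at ht
  split_ifs with h1 h2
  · -- FIN
    rw [if_pos h1, if_pos h2] at ht
    have hb1 : nxt E m ≤ 1 := (hsub (nxt_mem hcl h1)).2
    have hmb : m ≤ nxt E m := le_nxt h1
    rcases eq_or_lt_of_le hmb with hd | hd
    · have he : m + t * (nxt E m - m) = m := by rw [← hd]; ring
      rw [he]
      exact ⟨⟨le_rfl, hm1⟩, bse_self h0 hm hm0, fun e _ hme => hme⟩
    · have hval : m + t * (nxt E m - m) < nxt E m := by nlinarith [ht.1, ht.2]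
      have hval0 : m ≤ m + t * (nxt E m - m) := by nlinarith [ht.1]
      refine ⟨⟨hval0, by linarith⟩, bse_gap hcl h0 hm hm0 hval0 (fun _ => hval), ?_⟩
      intro e he hme
      exact lt_of_lt_of_le hval (nxt_le he hme)
  · -- INF
    rw [if_pos h1, if_neg h2] at ht
    have ht0 : 0 ≤ t := ht
    have hb1 : nxt E m ≤ 1 := (hsub (nxt_mem hcl h1)).2
    have hmb : m ≤ nxt E m := le_nxt h1
    have htp : (0:ℝ) < 1 + t := by linarith
    rcases eq_or_lt_of_le hmb with hd | hd
    · have he : nxt E m - (nxt E m - m) / (1 + t) = m := by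
        rw [← hd]; simp
      rw [he]
      exact ⟨⟨le_rfl, hm1⟩, bse_self h0 hm hm0, fun e _ hme => hme⟩
    · have hq1 : (nxt E m - m) / (1 + t) ≤ nxt E m - m := div_le_self (by linarith) (by linarith)
      have hq2 : 0 < (nxt E m - m) / (1 + t) := div_pos (by linarith) htp
      have hval : nxt E m - (nxt E m - m) / (1 + t) < nxt E m := by linarith
      have hval0 : m ≤ nxt E m - (nxt E m - m) / (1 + t) := by linarith
      refine ⟨⟨hval0, by linarith⟩, bse_gap hcl h0 hm hm0 hval0 (fun _ => hval), ?_⟩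
      intro e he hme
      exact lt_of_lt_of_le hval (nxt_le he hme)
  · -- TOP
    rw [if_neg h1] at ht
    refine ⟨⟨by linarith [ht.1], by linarith [ht.2]⟩,
      bse_gap hcl h0 hm hm0 (by linarith [ht.1]) (fun hne => absurd hne h1), ?_⟩
    intro e he hme
    exact absurd (Set.nonempty_of_mem (Set.mem_inter he (Set.mem_Ioi.2 hme))) h1

lemma gphi_gval (hcl : IsClosed E) (h0 : (0:ℝ) ∈ E) {m z : ℝ}
    (hz0 : 0 ≤ z) (hb : bse E z = m) :
    gphi E σ m (gval E σ m z) = z := by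
  have hmz : m ≤ z := hb ▸ bse_le h0 hz0
  rcases eq_or_lt_of_le hmz with h | h
  · rw [← h, gval_self, gphi_zero]
  · unfold gphi gval
    split_ifs with h1 h2
    · have hzb := lt_nxt_of_bse hcl h0 hz0 hb h h1
      rw [div_mul_cancel₀ _ (by linarith : nxt E m - m ≠ 0)]
      ring
    · have hzb := lt_nxt_of_bse hcl h0 hz0 hb h h1
      have hd1 : nxt E m - z ≠ 0 := by linarith
      have hd2 : nxt E m - m ≠ 0 := by linarith
      have he : 1 + (z - m) / (nxt E m - z) = (nxt E m - m) / (nxt E m - z) := by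
        field_simp
        ring
      rw [he, div_div_cancel₀ hd2]
      ring
    · ring

lemma gval_gphi (hcl : IsClosed E) (h0 : (0:ℝ) ∈ E) {m t : ℝ}
    (ht : t ∈ Sset E σ m)
    (hdeg : (E ∩ Set.Ioi m).Nonempty → nxt E m = m → t = 0) :
    gval E σ m (gphi E σ m t) = t := by
  unfold gval gphi
  unfold Sset at ht
  split_ifs with h1 h2
  · rw [if_pos h1, if_pos h2] at ht
    rcases eq_or_lt_of_le (le_nxt h1) with hd | hd
    · rw [hdeg h1 hd.symm, ← hd]; simp
    · rw [add_sub_cancel_left]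
      exact mul_div_cancel_right₀ t (by linarith : nxt E m - m ≠ 0)
  · rw [if_pos h1, if_neg h2] at ht
    have ht0 : 0 ≤ t := ht
    have htp : (0:ℝ) < 1 + t := by linarith
    rcases eq_or_lt_of_le (le_nxt h1) with hd | hd
    · rw [hdeg h1 hd.symm, ← hd]; simp
    · have hd2 : nxt E m - m ≠ 0 := by linarith
      have hnum : nxt E m - (nxt E m - (nxt E m - m) / (1 + t)) = (nxt E m - m) / (1 + t) := by
        ring
      rw [hnum]
      rw [div_eq_iff (div_ne_zero hd2 (ne_of_gt htp))]
      field_simp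
      ring
  · rw [if_neg h1] at ht
    ring

lemma gphi_mono {m s t : ℝ} (hs : 0 ≤ s) (hst : s ≤ t) :
    gphi E σ m s ≤ gphi E σ m t := by
  unfold gphi
  split_ifs with h1 h2
  · have hmb : m ≤ nxt E m := le_nxt h1
    nlinarith
  · have hmb : m ≤ nxt E m := le_nxt h1
    have := div_le_div_of_nonneg_left (by linarith : (0:ℝ) ≤ nxt E m - m)
      (by linarith : (0:ℝ) < 1 + s) (by linarith : 1 + s ≤ 1 + t)
    linarith
  · linarith

lemma gphi_strictMono {m s t : ℝ}
    (hnd : ∀ _ : (E ∩ Set.Ioi m).Nonempty, m < nxt E m)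
    (hs : 0 ≤ s) (hst : s < t) : gphi E σ m s < gphi E σ m t := by
  unfold gphi
  split_ifs with h1 h2
  · have hmb := hnd h1
    nlinarith
  · have hmb := hnd h1
    have := div_lt_div_of_pos_left (by linarith : (0:ℝ) < nxt E m - m)
      (by linarith : (0:ℝ) < 1 + s) (by linarith : 1 + s < 1 + t)
    linarith
  · linarith

lemma gval_mono (hcl : IsClosed E) (h0 : (0:ℝ) ∈ E) {m y z : ℝ}
    (hy0 : 0 ≤ y) (hyz : y ≤ z) (hby : bse E y = m) (hbz : bse E z = m) :
    gval E σ m y ≤ gval E σ m z := by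
  have hz0 : 0 ≤ z := le_trans hy0 hyz
  have hmy : m ≤ y := hby ▸ bse_le h0 hy0
  have hmz : m ≤ z := hbz ▸ bse_le h0 hz0
  rcases eq_or_lt_of_le hmz with h | h
  · have hy' : y = m := le_antisymm (h ▸ hyz) hmy
    have hz' : z = m := h.symm
    rw [hy', hz']
  · have hz_lt : ∀ _ : (E ∩ Set.Ioi m).Nonempty, z < nxt E m :=
      fun hne => lt_nxt_of_bse hcl h0 hz0 hbz h hne
    unfold gval
    split_ifs with h1 h2
    · have hzb := hz_lt h1
      exact (div_le_div_iff_of_pos_right (by linarith)).2 (by linarith)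
    · have hzb := hz_lt h1
      have hmb : m ≤ nxt E m := le_nxt h1
      rcases eq_or_lt_of_le hmy with hy | hy
      · rw [← hy]
        simp only [sub_self, zero_div]
        exact div_nonneg (by linarith) (by linarith)
      · rw [div_le_div_iff₀ (by linarith) (by linarith)]
        nlinarith [mul_nonneg (sub_nonneg.2 hyz) (sub_nonneg.2 hmb)]
    · linarith

lemma gval_pos (hcl : IsClosed E) (h0 : (0:ℝ) ∈ E) {m z : ℝ}
    (hz0 : 0 ≤ z) (hb : bse E z = m) (hmz : m < z) : 0 < gval E σ m z := by
  unfold gval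
  split_ifs with h1 h2
  · have hzb := lt_nxt_of_bse hcl h0 hz0 hb hmz h1
    exact div_pos (by linarith) (by linarith)
  · have hzb := lt_nxt_of_bse hcl h0 hz0 hb hmz h1
    exact div_pos (by linarith) (by linarith)
  · linarith

lemma uval_mem (hcl : IsClosed E) (h0 : (0:ℝ) ∈ E) (hsub : E ⊆ Set.Icc 0 1) {m x : ℝ}
    (hm1 : m ≤ 1) (hx : x ∈ Set.Icc (0:ℝ) 1) : uval E σ m x ∈ Sset E σ m := by
  unfold uval
  split_ifs with h
  · exact gval_mem hcl h0 hsub (h ▸ bse_mem hcl h0 hx.1) hx.1 hx.2 h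
  · exact Sset_zero hm1

lemma uval_deg (hcl : IsClosed E) (h0 : (0:ℝ) ∈ E) {m x : ℝ}
    (hne : (E ∩ Set.Ioi m).Nonempty) (hd : nxt E m = m) (hx0 : 0 ≤ x) :
    uval E σ m x = 0 := by
  unfold uval
  split_ifs with h
  · rw [eq_of_bse_deg hcl h0 hx0 hne hd h]
    exact gval_self m
  · rfl

lemma uval_of_ne {m x : ℝ} (h : bse E x ≠ m) : uval E σ m x = 0 := if_neg h

lemma opE_eq {p : ℝ} (hp : p ∈ Set.Ioo (0:ℝ) 1) (x y : ℝ) :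
    opE E σ p x y = gphi E σ (max (bse E x) (bse E y))
      (p * uval E σ (max (bse E x) (bse E y)) x
        + (1 - p) * uval E σ (max (bse E x) (bse E y)) y) := by
  unfold opE
  rw [if_neg (not_le.2 hp.1), if_neg (not_le.2 hp.2)]

lemma max_bse_mem (hcl : IsClosed E) (h0 : (0:ℝ) ∈ E) {x y : ℝ} (hx0 : 0 ≤ x) (hy0 : 0 ≤ y) :
    max (bse E x) (bse E y) ∈ E := by
  rcases le_total (bse E x) (bse E y) with h | h
  · rw [max_eq_right h]; exact bse_mem hcl h0 hy0
  · rw [max_eq_left h]; exact bse_mem hcl h0 hx0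

lemma opE_spec (hcl : IsClosed E) (h0 : (0:ℝ) ∈ E) (hsub : E ⊆ Set.Icc 0 1) {p x y : ℝ}
    (hp : p ∈ Set.Ioo (0:ℝ) 1) (hx : x ∈ Set.Icc (0:ℝ) 1) (hy : y ∈ Set.Icc (0:ℝ) 1) :
    (p * uval E σ (max (bse E x) (bse E y)) x
        + (1 - p) * uval E σ (max (bse E x) (bse E y)) y) ∈ Sset E σ (max (bse E x) (bse E y)) ∧
    opE E σ p x y ∈ Set.Icc (max (bse E x) (bse E y)) 1 ∧
    bse E (opE E σ p x y) = max (bse E x) (bse E y) ∧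
    gval E σ (max (bse E x) (bse E y)) (opE E σ p x y)
      = p * uval E σ (max (bse E x) (bse E y)) x
        + (1 - p) * uval E σ (max (bse E x) (bse E y)) y := by
  have hmE : max (bse E x) (bse E y) ∈ E := max_bse_mem hcl h0 hx.1 hy.1
  have hm1 : max (bse E x) (bse E y) ≤ 1 := (hsub hmE).2
  have hsS := Sset_combo (m := max (bse E x) (bse E y)) (σ := σ) hp.1.le hp.2.le
    (uval_mem hcl h0 hsub hm1 hx) (uval_mem hcl h0 hsub hm1 hy)
  rw [opE_eq hp x y]
  have hg := gphi_mem hcl h0 hsub hmE hsS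
  refine ⟨hsS, hg.1, hg.2.1, ?_⟩
  refine gval_gphi hcl h0 hsS ?_
  intro hne hd
  rw [uval_deg hcl h0 hne hd hx.1, uval_deg hcl h0 hne hd hy.1]
  ring

lemma opE_mem01 (hcl : IsClosed E) (h0 : (0:ℝ) ∈ E) (hsub : E ⊆ Set.Icc 0 1) {p x y : ℝ}
    (hp : p ∈ Set.Ioo (0:ℝ) 1) (hx : x ∈ Set.Icc (0:ℝ) 1) (hy : y ∈ Set.Icc (0:ℝ) 1) :
    opE E σ p x y ∈ Set.Icc (0:ℝ) 1 := by
  obtain ⟨_, hIcc, _, _⟩ := opE_spec hcl h0 hsub hp hx hy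
  exact ⟨le_trans (le_trans (bse_nonneg h0 hx.1) (le_max_left _ _)) hIcc.1, hIcc.2⟩

lemma memF (hcl : IsClosed E) (h0 : (0:ℝ) ∈ E) (hsub : E ⊆ Set.Icc 0 1) :
    ∀ p ∈ Set.Icc (0:ℝ) 1, ∀ x ∈ Set.Icc (0:ℝ) 1, ∀ y ∈ Set.Icc (0:ℝ) 1,
      opE E σ p x y ∈ Set.Icc (0:ℝ) 1 := by
  intro p hp x hx y hy
  by_cases h1 : p ≤ 0
  · unfold opE; rw [if_pos h1]; exact hy
  · by_cases h2 : 1 ≤ p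
    · unfold opE; rw [if_neg h1, if_pos h2]; exact hx
    · exact opE_mem01 hcl h0 hsub ⟨not_le.1 h1, not_le.1 h2⟩ hx hy

lemma idemF (hcl : IsClosed E) (h0 : (0:ℝ) ∈ E) :
    ∀ p ∈ Set.Ioo (0:ℝ) 1, ∀ x ∈ Set.Icc (0:ℝ) 1, opE E σ p x x = x := by
  intro p hp x hx
  rw [opE_eq hp x x, max_self]
  unfold uval
  rw [if_pos rfl]
  have h : p * gval E σ (bse E x) x + (1 - p) * gval E σ (bse E x) x
      = gval E σ (bse E x) x := by ring
  rw [h]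
  exact gphi_gval hcl h0 hx.1 rfl

lemma commF : ∀ p ∈ Set.Ioo (0:ℝ) 1, ∀ x ∈ Set.Icc (0:ℝ) 1, ∀ y ∈ Set.Icc (0:ℝ) 1,
    opE E σ p x y = opE E σ (1 - p) y x := by
  intro p hp x _ y _
  have hp' : 1 - p ∈ Set.Ioo (0:ℝ) 1 := ⟨by linarith [hp.2], by linarith [hp.1]⟩
  rw [opE_eq hp x y, opE_eq hp' y x, max_comm (bse E y) (bse E x)]
  congr 1
  ring

lemma proj1F : ∀ x ∈ Set.Icc (0:ℝ) 1, ∀ y ∈ Set.Icc (0:ℝ) 1, opE E σ 1 x y = x := by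
  intro x _ y _
  unfold opE
  norm_num

lemma proj0F : ∀ x ∈ Set.Icc (0:ℝ) 1, ∀ y ∈ Set.Icc (0:ℝ) 1, opE E σ 0 x y = y := by
  intro x _ y _
  unfold opE
  norm_num

lemma assocF (hcl : IsClosed E) (h0 : (0:ℝ) ∈ E) (hsub : E ⊆ Set.Icc 0 1) :
    ∀ p ∈ Set.Ioo (0:ℝ) 1, ∀ q ∈ Set.Ioo (0:ℝ) 1,
      ∀ x ∈ Set.Icc (0:ℝ) 1, ∀ y ∈ Set.Icc (0:ℝ) 1, ∀ z ∈ Set.Icc (0:ℝ) 1,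
      opE E σ q (opE E σ p x y) z
        = opE E σ (p * q) x (opE E σ ((1 - p) * q / (1 - p * q)) y z) := by
  intro p hp q hq x hx y hy z hz
  have h1pq : 0 < 1 - p * q := by nlinarith [hp.1, hp.2, hq.1, hq.2]
  have hpq : p * q ∈ Set.Ioo (0:ℝ) 1 := ⟨mul_pos hp.1 hq.1, by linarith⟩
  have hrr : (1 - p) * q / (1 - p * q) ∈ Set.Ioo (0:ℝ) 1 :=
    ⟨div_pos (mul_pos (by linarith [hp.2]) hq.1) h1pq,
     (div_lt_one h1pq).2 (by nlinarith [hq.2, hp.1])⟩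
  obtain ⟨hs1, hIcc1, hb1, hg1⟩ := opE_spec hcl h0 hsub hp hx hy
  obtain ⟨hs2, hIcc2, hb2, hg2⟩ := opE_spec hcl h0 hsub hrr hy hz
  rw [opE_eq hq (opE E σ p x y) z, opE_eq hpq x (opE E σ ((1 - p) * q / (1 - p * q)) y z),
    hb1, hb2, max_assoc (bse E x) (bse E y) (bse E z)]
  set M := max (bse E x) (max (bse E y) (bse E z)) with hM
  congr 1
  -- compute the absorbed values
  have hu1 : uval E σ M (opE E σ p x y)
      = if max (bse E x) (bse E y) = M then
          p * uval E σ M x + (1 - p) * uval E σ M y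
        else 0 := by
    unfold uval
    rw [hb1]
    by_cases hc : max (bse E x) (bse E y) = M
    · rw [if_pos hc, if_pos hc, ← hc, hg1]
      unfold uval
      rfl
    · rw [if_neg hc, if_neg hc]
  have hu2 : uval E σ M (opE E σ ((1 - p) * q / (1 - p * q)) y z)
      = if max (bse E y) (bse E z) = M then
          ((1 - p) * q / (1 - p * q)) * uval E σ M y
            + (1 - (1 - p) * q / (1 - p * q)) * uval E σ M z
        else 0 := by
    unfold uval
    rw [hb2]
    by_cases hc : max (bse E y) (bse E z) = M
    · rw [if_pos hc, if_pos hc, ← hc, hg2]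
      unfold uval
      rfl
    · rw [if_neg hc, if_neg hc]
  rw [hu1, hu2]
  have hxM : bse E x ≤ M := le_max_left _ _
  have hyM : bse E y ≤ M := le_trans (le_max_left _ _) (le_max_right _ _)
  have hzM : bse E z ≤ M := le_trans (le_max_right _ _) (le_max_right _ _)
  have h1pq' : 1 - p * q ≠ 0 := ne_of_gt h1pq
  by_cases hc1 : max (bse E x) (bse E y) = M
  · rw [if_pos hc1]
    by_cases hc2 : max (bse E y) (bse E z) = M
    · rw [if_pos hc2]
      linear_combination (-(q * (1 - p) * (uval E σ M y - uval E σ M z))) * mul_inv_cancel₀ h1pq'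
    · rw [if_neg hc2]
      have hxeq : bse E x = M := by
        rcases le_total (bse E x) (max (bse E y) (bse E z)) with hle | hle
        · exact absurd ((max_eq_right hle).symm.trans hM.symm) hc2
        · exact (max_eq_left hle).symm.trans hM.symm
      have hyne : bse E y ≠ M := fun h =>
        hc2 (le_antisymm (max_le hyM hzM) (by rw [← h]; exact le_max_left _ _))
      have hzne : bse E z ≠ M := fun h =>
        hc2 (le_antisymm (max_le hyM hzM) (by rw [← h]; exact le_max_right _ _))
      rw [uval_of_ne hyne, uval_of_ne hzne]
      ring
  · rw [if_neg hc1]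
    have hM' : max (max (bse E x) (bse E y)) (bse E z) = M := by rw [hM, max_assoc]
    have hMz : bse E z = M := by
      rcases le_total (max (bse E x) (bse E y)) (bse E z) with hle | hle
      · exact (max_eq_right hle).symm.trans hM'
      · exact absurd ((max_eq_left hle).symm.trans hM') hc1
    have hc2 : max (bse E y) (bse E z) = M :=
      le_antisymm (max_le hyM hzM) (by rw [← hMz]; exact le_max_right _ _)
    have hxne : bse E x ≠ M := fun h =>
      hc1 (le_antisymm (max_le hxM hyM) (by rw [← h]; exact le_max_left _ _))
    have hyne : bse E y ≠ M := fun h =>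
      hc1 (le_antisymm (max_le hxM hyM) (by rw [← h]; exact le_max_right _ _))
    rw [if_pos hc2, uval_of_ne hxne, uval_of_ne hyne]
    linear_combination (q * (1 - p) * uval E σ M z) * mul_inv_cancel₀ h1pq'

lemma moF (hcl : IsClosed E) (h0 : (0:ℝ) ∈ E) (hsub : E ⊆ Set.Icc 0 1) :
    ∀ x ∈ Set.Icc (0:ℝ) 1, ∀ x' ∈ Set.Icc (0:ℝ) 1, ∀ y ∈ Set.Icc (0:ℝ) 1,
      ∀ p ∈ Set.Ioo (0:ℝ) 1, x ≤ x' → opE E σ p x y ≤ opE E σ p x' y := by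
  intro x hx x' hx' y hy p hp hxx
  obtain ⟨hs1, hIcc1, hb1, hg1⟩ := opE_spec hcl h0 hsub hp hx hy
  obtain ⟨hs2, hIcc2, hb2, hg2⟩ := opE_spec hcl h0 hsub hp hx' hy
  have hbm : bse E x ≤ bse E x' := bse_mono h0 hx.1 hxx
  have hmm : max (bse E x) (bse E y) ≤ max (bse E x') (bse E y) := max_le_max hbm le_rfl
  rcases eq_or_lt_of_le hmm with he | hlt
  · rw [opE_eq hp x y, opE_eq hp x' y, ← he]
    have hu : uval E σ (max (bse E x) (bse E y)) x
        ≤ uval E σ (max (bse E x) (bse E y)) x' := by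
      unfold uval
      split_ifs with h1 h2 h2
      · exact gval_mono hcl h0 hx.1 hxx h1 h2
      · exfalso
        refine h2 (le_antisymm ?_ ?_)
        · rw [he]; exact le_max_left _ _
        · rw [← h1]; exact hbm
      · exact Sset_nonneg (gval_mem hcl h0 hsub (h2 ▸ bse_mem hcl h0 hx'.1) hx'.1 hx'.2 h2)
      · exact le_rfl
    have hley : (0:ℝ) ≤ 1 - p := by linarith [hp.2]
    refine gphi_mono (Sset_nonneg hs1) ?_
    have := mul_le_mul_of_nonneg_left hu hp.1.le
    linarith
  · have hx'M : bse E x' = max (bse E x') (bse E y) := by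
      rcases le_total (bse E x') (bse E y) with h | h
      · exfalso
        rw [max_eq_right h] at hlt
        exact absurd (le_max_right (bse E x) (bse E y)) (not_le.2 hlt)
      · exact (max_eq_left h).symm
    have hM'E : max (bse E x') (bse E y) ∈ E := max_bse_mem hcl h0 hx'.1 hy.1
    have hmE : max (bse E x) (bse E y) ∈ E := max_bse_mem hcl h0 hx.1 hy.1
    have hltv : opE E σ p x y < max (bse E x') (bse E y) := by
      rw [opE_eq hp x y]
      exact (gphi_mem hcl h0 hsub hmE hs1).2.2 _ hM'E hlt
    linarith [hIcc2.1]

lemma gphi_cont {m t : ℝ} (ht : 0 ≤ t) : ContinuousAt (gphi E σ m) t := by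
  unfold gphi
  split_ifs with h1 h2
  · fun_prop
  · have : (1:ℝ) + t ≠ 0 := by linarith
    fun_prop (disch := assumption)
  · fun_prop

lemma gval_cont (hcl : IsClosed E) {m z : ℝ}
    (hz : (E ∩ Set.Ioi m).Nonempty → z < nxt E m) : ContinuousAt (gval E σ m) z := by
  unfold gval
  split_ifs with h1 h2
  · fun_prop
  · have : nxt E m - z ≠ 0 := by have := hz h1; intro h; linarith
    fun_prop (disch := assumption)
  · fun_prop

lemma lcF (hcl : IsClosed E) (h0 : (0:ℝ) ∈ E) (hsub : E ⊆ Set.Icc 0 1) :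
    ∀ x ∈ Set.Icc (0:ℝ) 1, ∀ y ∈ Set.Icc (0:ℝ) 1, x ≤ y →
      y ≤ Filter.liminf (fun p => opE E σ p y x) (𝓝[<] (1:ℝ)) := by
  intro x hx y hy hxy
  have hbm : bse E x ≤ bse E y := bse_mono h0 hx.1 hxy
  have hmax : max (bse E y) (bse E x) = bse E y := max_eq_left hbm
  have hyE : bse E y ∈ E := bse_mem hcl h0 hy.1
  have hfeq : ∀ p ∈ Set.Ioo (0:ℝ) 1, opE E σ p y x
      = gphi E σ (bse E y) (p * gval E σ (bse E y) y
          + (1 - p) * uval E σ (bse E y) x) := by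
    intro p hp
    rw [opE_eq hp y x, hmax]
    congr 2
    unfold uval; rw [if_pos rfl]
  have hIoo : Set.Ioo (0:ℝ) 1 ∈ 𝓝[<] (1:ℝ) :=
    Ioo_mem_nhdsLT_of_mem ⟨zero_lt_one, le_rfl⟩
  have hgy : gval E σ (bse E y) y ∈ Sset E σ (bse E y) :=
    gval_mem hcl h0 hsub hyE hy.1 hy.2 rfl
  have h1 : Tendsto (fun p : ℝ => p * gval E σ (bse E y) y
      + (1 - p) * uval E σ (bse E y) x) (𝓝[<] (1:ℝ)) (𝓝 (gval E σ (bse E y) y)) := by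
    have hcont : Tendsto (fun p : ℝ => p * gval E σ (bse E y) y
        + (1 - p) * uval E σ (bse E y) x) (𝓝 (1:ℝ))
        (𝓝 (1 * gval E σ (bse E y) y + (1 - 1) * uval E σ (bse E y) x)) := by
      apply Continuous.tendsto
      fun_prop
    simpa using hcont.mono_left nhdsWithin_le_nhds
  have hc : ContinuousAt (gphi E σ (bse E y)) (gval E σ (bse E y) y) :=
    gphi_cont (Sset_nonneg hgy)
  have htend0 := (hc.tendsto.comp h1)
  rw [gphi_gval hcl h0 hy.1 rfl] at htend0
  have htend : Tendsto (fun p => opE E σ p y x) (𝓝[<] (1:ℝ)) (𝓝 y) := by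
    refine Tendsto.congr' ?_ htend0
    filter_upwards [hIoo] with p hp
    exact (hfeq p hp).symm
  rw [htend.liminf_eq]


lemma eats_of_mem (hcl : IsClosed E) (h0 : (0:ℝ) ∈ E) (hsub : E ⊆ Set.Icc 0 1) {y : ℝ}
    (hyE : y ∈ E) : ∀ t ∈ Set.Ioc (0:ℝ) 1, opE E σ t y 0 = y := by
  intro t ht
  have hy0 : 0 ≤ y := (hsub hyE).1
  rcases eq_or_lt_of_le ht.2 with h1 | h1
  · unfold opE
    rw [if_neg (not_le.2 ht.1), if_pos (le_of_eq h1.symm)]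
  · rw [opE_eq ⟨ht.1, h1⟩ y 0]
    have hb1 : bse E y = y := bse_self h0 hyE hy0
    have hb0 : bse E 0 = 0 := bse_self h0 h0 le_rfl
    rw [hb1, hb0, max_eq_left hy0]
    have hu1 : uval E σ y y = 0 := by
      unfold uval
      rw [if_pos hb1, gval_self]
    have hu0 : uval E σ y 0 = 0 := by
      unfold uval
      split_ifs with h
      · rw [hb0] at h
        rw [← h, gval_self]
      · rfl
    rw [hu1, hu0, show t * 0 + (1 - t) * 0 = 0 by ring, gphi_zero]

lemma not_eats_of_not_mem (hcl : IsClosed E) (h0 : (0:ℝ) ∈ E) (hsub : E ⊆ Set.Icc 0 1) {y : ℝ}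
    (hy : y ∈ Set.Icc (0:ℝ) 1) (hne : y ∉ E) : opE E σ (1/2) y 0 ≠ y := by
  have hby : bse E y ∈ E := bse_mem hcl h0 hy.1
  have hlt : bse E y < y := lt_of_le_of_ne (bse_le h0 hy.1) (fun h => hne (h ▸ hby))
  have hp : (1/2 : ℝ) ∈ Set.Ioo (0:ℝ) 1 := by norm_num
  rw [opE_eq hp y 0]
  have hb0 : bse E 0 = 0 := bse_self h0 h0 le_rfl
  have hm0 : 0 ≤ bse E y := bse_nonneg h0 hy.1
  rw [hb0, max_eq_left hm0]
  have hu1 : uval E σ (bse E y) y = gval E σ (bse E y) y := if_pos rfl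
  have hu0 : uval E σ (bse E y) 0 = 0 := by
    unfold uval
    split_ifs with h
    · rw [hb0] at h
      rw [← h, gval_self]
    · rfl
  rw [hu1, hu0]
  have hgpos : 0 < gval E σ (bse E y) y := gval_pos hcl h0 hy.1 rfl hlt
  have hnd : ∀ _ : (E ∩ Set.Ioi (bse E y)).Nonempty, bse E y < nxt E (bse E y) :=
    fun hne' => hlt.trans (lt_nxt_of_bse hcl h0 hy.1 rfl hlt hne')
  have hkey : gphi E σ (bse E y) (1/2 * gval E σ (bse E y) y + (1 - 1/2) * 0)
      < gphi E σ (bse E y) (gval E σ (bse E y) y) :=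
    gphi_strictMono hnd (by linarith) (by linarith)
  rw [gphi_gval hcl h0 hy.1 rfl] at hkey
  exact ne_of_lt hkey

lemma isoF (hcl : IsClosed E) (h0 : (0:ℝ) ∈ E) (hsub : E ⊆ Set.Icc 0 1) {a b : ℝ}
    (hσab : σ a b ∈ ({1, ⊤} : Set ENNReal)) (haE : a ∈ E) (hbE : b ∈ E) (hlt : a < b)
    (hgap : Set.Ioo a b ∩ E = ∅) :
    Set.BijOn (gphi E σ a) (tauSet (σ a b)) (Set.Ico a b) ∧
    ∀ p ∈ Set.Ioo (0:ℝ) 1, ∀ s ∈ tauSet (σ a b), ∀ t ∈ tauSet (σ a b),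
      gphi E σ a (p * s + (1 - p) * t) = opE E σ p (gphi E σ a s) (gphi E σ a t) := by
  have hne : (E ∩ Set.Ioi a).Nonempty := ⟨b, hbE, hlt⟩
  have hnxt : nxt E a = b := by
    refine le_antisymm (nxt_le hbE hlt) (le_csInf hne ?_)
    rintro e ⟨heE, hae⟩
    by_contra hh; push_neg at hh
    rw [Set.eq_empty_iff_forall_notMem] at hgap
    exact hgap e ⟨⟨hae, hh⟩, heE⟩
  have hSeq : tauSet (σ a b) = Sset E σ a := by
    rcases hσab with h1 | h1
    · unfold Sset tauSet
      rw [if_pos hne, hnxt, if_pos h1, h1]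
      ext t
      simp [ENNReal.ofReal_lt_one]
    · rw [Set.mem_singleton_iff] at h1
      unfold Sset tauSet
      rw [if_pos hne, hnxt, if_neg (by rw [h1]; simp), h1]
      ext t
      simp [ENNReal.ofReal_lt_top]
  have ha0 : 0 ≤ a := (hsub haE).1
  have hmapsto : Set.MapsTo (gphi E σ a) (tauSet (σ a b)) (Set.Ico a b) := by
    intro t ht
    rw [hSeq] at ht
    obtain ⟨hIcc, hbse, hlt'⟩ := gphi_mem hcl h0 hsub haE ht
    exact ⟨hIcc.1, hlt' b hbE hlt⟩
  have hmapsto' : Set.MapsTo (gval E σ a) (Set.Ico a b) (tauSet (σ a b)) := by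
    intro z hz
    have hz0 : 0 ≤ z := le_trans ha0 hz.1
    have hz1 : z ≤ 1 := le_trans hz.2.le (hsub hbE).2
    have hbse : bse E z = a := bse_gap hcl h0 haE ha0 hz.1 (fun _ => by rw [hnxt]; exact hz.2)
    rw [hSeq]
    exact gval_mem hcl h0 hsub haE hz0 hz1 hbse
  have hleft : Set.LeftInvOn (gval E σ a) (gphi E σ a) (tauSet (σ a b)) := by
    intro t ht
    rw [hSeq] at ht
    exact gval_gphi hcl h0 ht (fun _ hd => absurd (hnxt.symm.trans hd) (ne_of_gt hlt))
  have hright : Set.RightInvOn (gval E σ a) (gphi E σ a) (Set.Ico a b) := by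
    intro z hz
    have hz0 : 0 ≤ z := le_trans ha0 hz.1
    have hbse : bse E z = a := bse_gap hcl h0 haE ha0 hz.1 (fun _ => by rw [hnxt]; exact hz.2)
    exact gphi_gval hcl h0 hz0 hbse
  refine ⟨Set.InvOn.bijOn ⟨hleft, hright⟩ hmapsto hmapsto', ?_⟩
  intro p hp s hs t ht
  have hs' := hs; have ht' := ht
  rw [hSeq] at hs' ht'
  have hPs := gphi_mem hcl h0 hsub haE hs'
  have hPt := gphi_mem hcl h0 hsub haE ht'
  rw [opE_eq hp, hPs.2.1, hPt.2.1, max_self]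
  have hus : uval E σ a (gphi E σ a s) = s := by
    unfold uval
    rw [if_pos hPs.2.1]
    exact gval_gphi hcl h0 hs' (fun _ hd => absurd (hnxt.symm.trans hd) (ne_of_gt hlt))
  have hut : uval E σ a (gphi E σ a t) = t := by
    unfold uval
    rw [if_pos hPt.2.1]
    exact gval_gphi hcl h0 ht' (fun _ hd => absurd (hnxt.symm.trans hd) (ne_of_gt hlt))
  rw [hus, hut]

def Racc (E : Set ℝ) (x : ℝ) : Prop := ∀ ε > 0, (E ∩ Set.Ioc x (x + ε)).Nonempty

lemma racc_mem (hcl : IsClosed E) {x : ℝ} (h : Racc E x) : x ∈ E := by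
  have hx : x ∈ closure E := by
    rw [Metric.mem_closure_iff]
    intro ε hε
    obtain ⟨e, heE, hx1, hx2⟩ := h (ε/2) (by linarith)
    refine ⟨e, heE, ?_⟩
    rw [Real.dist_eq, abs_lt]
    constructor <;> linarith
  rwa [hcl.closure_eq] at hx

lemma not_racc_bse {x : ℝ} (h : ¬ Racc E x) :
    ∃ δ > 0, ∀ ε : ℝ, 0 < ε → ε < δ → bse E (x + ε) = bse E x := by
  unfold Racc at h
  push_neg at h
  obtain ⟨δ, hδ, hemp⟩ := h
  refine ⟨δ, hδ, fun ε hε hεδ => ?_⟩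
  unfold bse
  congr 1
  ext e
  simp only [Set.mem_inter_iff, Set.mem_Icc]
  constructor
  · rintro ⟨heE, h0e, hee⟩
    refine ⟨heE, h0e, ?_⟩
    by_contra hh
    push_neg at hh
    have hmem : e ∈ E ∩ Set.Ioc x (x + δ) := ⟨heE, hh, by linarith⟩
    rw [hemp] at hmem
    exact hmem
  · rintro ⟨heE, h0e, hee⟩
    exact ⟨heE, h0e, by linarith⟩

lemma racc_bse_eq (h0 : (0:ℝ) ∈ E) {x z : ℝ} (h : Racc E x) (hz0 : 0 ≤ z)
    (hb : bse E z = x) : z = x := by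
  have hxz : x ≤ z := hb ▸ bse_le h0 hz0
  rcases eq_or_lt_of_le hxz with hh | hh
  · exact hh.symm
  · obtain ⟨e, heE, he1, he2⟩ := h (z - x) (by linarith)
    have hx0 : 0 ≤ x := hb ▸ bse_nonneg h0 hz0
    have he0 : 0 ≤ e := le_trans hx0 he1.le
    have hle := le_bse heE he0 (show e ≤ z by linarith)
    rw [hb] at hle
    linarith

lemma deg_racc {m : ℝ} (hne : (E ∩ Set.Ioi m).Nonempty) (hd : nxt E m = m) : Racc E m := by
  intro ε hε
  have hlt : sInf (E ∩ Set.Ioi m) < m + ε := by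
    rw [show sInf (E ∩ Set.Ioi m) = nxt E m from rfl, hd]; linarith
  obtain ⟨e, he, helt⟩ := exists_lt_of_csInf_lt hne hlt
  exact ⟨e, he.1, he.2, helt.le⟩

lemma lt_nxt_of_not_racc (hcl : IsClosed E) (h0 : (0:ℝ) ∈ E) {z m : ℝ} (hz0 : 0 ≤ z)
    (hb : bse E z = m) (hnr : ¬ Racc E z) (hne : (E ∩ Set.Ioi m).Nonempty) : z < nxt E m := by
  have hmz : m ≤ z := hb ▸ bse_le h0 hz0
  rcases eq_or_lt_of_le hmz with hh | hh
  · by_contra hc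
    push_neg at hc
    have h1 : nxt E m = m := le_antisymm (le_of_le_of_eq hc hh.symm) (le_nxt hne)
    have h2 : Racc E m := deg_racc hne h1
    rw [hh] at h2
    exact hnr h2
  · exact lt_nxt_of_bse hcl h0 hz0 hb hh hne

lemma opE_le_max (hcl : IsClosed E) (h0 : (0:ℝ) ∈ E) (hsub : E ⊆ Set.Icc 0 1) {p x y : ℝ}
    (hp : p ∈ Set.Ioo (0:ℝ) 1) (hx : x ∈ Set.Icc (0:ℝ) 1) (hy : y ∈ Set.Icc (0:ℝ) 1) :
    opE E σ p x y ≤ max x y := by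
  obtain ⟨hs, hIcc, hb, hg⟩ := opE_spec hcl h0 hsub hp hx hy
  rw [opE_eq hp x y]
  have hmE : max (bse E x) (bse E y) ∈ E := max_bse_mem hcl h0 hx.1 hy.1
  have hm1 : max (bse E x) (bse E y) ≤ 1 := (hsub hmE).2
  have hux := uval_mem (σ := σ) hcl h0 hsub hm1 hx
  have huy := uval_mem (σ := σ) hcl h0 hsub hm1 hy
  have hmxy : max (bse E x) (bse E y) ≤ max x y :=
    max_le_max (bse_le h0 hx.1) (bse_le h0 hy.1)
  have hgx : gphi E σ (max (bse E x) (bse E y)) (uval E σ (max (bse E x) (bse E y)) x)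
      ≤ max x y := by
    unfold uval
    split_ifs with h
    · rw [gphi_gval hcl h0 hx.1 h]; exact le_max_left _ _
    · rw [gphi_zero]; exact hmxy
  have hgy : gphi E σ (max (bse E x) (bse E y)) (uval E σ (max (bse E x) (bse E y)) y)
      ≤ max x y := by
    unfold uval
    split_ifs with h
    · rw [gphi_gval hcl h0 hy.1 h]; exact le_max_right _ _
    · rw [gphi_zero]; exact hmxy
  rcases le_total (uval E σ (max (bse E x) (bse E y)) x)
      (uval E σ (max (bse E x) (bse E y)) y) with h | h
  · have hcomb : p * uval E σ (max (bse E x) (bse E y)) x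
        + (1 - p) * uval E σ (max (bse E x) (bse E y)) y
        ≤ uval E σ (max (bse E x) (bse E y)) y := by
      nlinarith [Sset_nonneg hux, Sset_nonneg huy, hp.1, hp.2,
        mul_le_mul_of_nonneg_left h hp.1.le]
    exact le_trans (gphi_mono (Sset_nonneg hs) hcomb) hgy
  · have hcomb : p * uval E σ (max (bse E x) (bse E y)) x
        + (1 - p) * uval E σ (max (bse E x) (bse E y)) y
        ≤ uval E σ (max (bse E x) (bse E y)) x := by
      nlinarith [Sset_nonneg hux, Sset_nonneg huy, hp.1, hp.2,
        mul_le_mul_of_nonneg_left h (by linarith [hp.2] : (0:ℝ) ≤ 1 - p)]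
    exact le_trans (gphi_mono (Sset_nonneg hs) hcomb) hgx

lemma op_racc_left (hcl : IsClosed E) (h0 : (0:ℝ) ∈ E) (hsub : E ⊆ Set.Icc 0 1) {p x y : ℝ}
    (hp : p ∈ Set.Ioo (0:ℝ) 1) (hx : x ∈ Set.Icc (0:ℝ) 1) (hy : y ∈ Set.Icc (0:ℝ) 1)
    (hax : Racc E x) (hxy : y ≤ x) : opE E σ p x y = x := by
  have hxE : x ∈ E := racc_mem hcl hax
  have hbx : bse E x = x := bse_self h0 hxE hx.1
  have hmax : max (bse E x) (bse E y) = x := by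
    rw [hbx]; exact max_eq_left (le_trans (bse_le h0 hy.1) hxy)
  rw [opE_eq hp x y, hmax]
  have hux : uval E σ x x = 0 := by unfold uval; rw [if_pos hbx, gval_self]
  have huy : uval E σ x y = 0 := by
    unfold uval
    split_ifs with h
    · rw [racc_bse_eq h0 hax hy.1 h, gval_self]
    · rfl
  rw [hux, huy, show p * 0 + (1 - p) * 0 = 0 by ring, gphi_zero]

lemma op_racc_right (hcl : IsClosed E) (h0 : (0:ℝ) ∈ E) (hsub : E ⊆ Set.Icc 0 1) {p x y : ℝ}
    (hp : p ∈ Set.Ioo (0:ℝ) 1) (hx : x ∈ Set.Icc (0:ℝ) 1) (hy : y ∈ Set.Icc (0:ℝ) 1)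
    (hay : Racc E y) (hxy : x ≤ y) : opE E σ p x y = y := by
  have hyE : y ∈ E := racc_mem hcl hay
  have hby : bse E y = y := bse_self h0 hyE hy.1
  have hmax : max (bse E x) (bse E y) = y := by
    rw [hby]; exact max_eq_right (le_trans (bse_le h0 hx.1) hxy)
  rw [opE_eq hp x y, hmax]
  have huy : uval E σ y y = 0 := by unfold uval; rw [if_pos hby, gval_self]
  have hux : uval E σ y x = 0 := by
    unfold uval
    split_ifs with h
    · rw [racc_bse_eq h0 hay hx.1 h, gval_self]
    · rfl
  rw [hux, huy, show p * 0 + (1 - p) * 0 = 0 by ring, gphi_zero]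


lemma tendsto_gphi_path {m v : ℝ} (g : ℝ → ℝ) (hg : ContinuousAt g 0) (hg0 : 0 ≤ g 0)
    (hv : gphi E σ m (g 0) = v)
    {f : ℝ → ℝ} (hev : ∀ᶠ ε in 𝓝[>] (0:ℝ), f ε = gphi E σ m (g ε)) :
    Tendsto f (𝓝[>] (0:ℝ)) (𝓝 v) := by
  have h1 : Tendsto (fun ε => gphi E σ m (g ε)) (𝓝 (0:ℝ)) (𝓝 (gphi E σ m (g 0))) :=
    (ContinuousAt.comp (gphi_cont hg0) hg : ContinuousAt (fun ε => gphi E σ m (g ε)) 0)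
  rw [hv] at h1
  exact Tendsto.congr' (by filter_upwards [hev] with ε h; exact h.symm)
    (h1.mono_left nhdsWithin_le_nhds)

lemma uc_bound (hcl : IsClosed E) (h0 : (0:ℝ) ∈ E) (hsub : E ⊆ Set.Icc 0 1) {p x y M : ℝ}
    (hp : p ∈ Set.Ioo (0:ℝ) 1) (hx : x ∈ Set.Ico (0:ℝ) 1) (hy : y ∈ Set.Ico (0:ℝ) 1)
    (hM : max x y ≤ M) :
    Filter.limsup (fun ε => opE E σ p (x + ε) (y + ε)) (𝓝[>] (0:ℝ)) ≤ M := by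
  have hδ : Set.Ioo (0:ℝ) (min (1 - x) (1 - y)) ∈ 𝓝[>] (0:ℝ) :=
    Ioo_mem_nhdsGT_of_mem ⟨le_rfl, lt_min (by linarith [hx.2]) (by linarith [hy.2])⟩
  have hmem : ∀ ε ∈ Set.Ioo (0:ℝ) (min (1 - x) (1 - y)),
      x + ε ∈ Set.Icc (0:ℝ) 1 ∧ y + ε ∈ Set.Icc (0:ℝ) 1 := by
    intro ε hε
    have h1 := lt_of_lt_of_le hε.2 (min_le_left _ _)
    have h2 := lt_of_lt_of_le hε.2 (min_le_right _ _)
    exact ⟨⟨by linarith [hx.1, hε.1], by linarith⟩, ⟨by linarith [hy.1, hε.1], by linarith⟩⟩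
  have hev : ∀ᶠ ε in 𝓝[>] (0:ℝ), opE E σ p (x + ε) (y + ε) ≤ M + ε := by
    filter_upwards [hδ] with ε hε
    obtain ⟨hxε, hyε⟩ := hmem ε hε
    have hb := opE_le_max (σ := σ) hcl h0 hsub hp hxε hyε
    have h2 : max (x + ε) (y + ε) ≤ M + ε :=
      max_le (by linarith [le_max_left x y]) (by linarith [le_max_right x y])
    linarith
  have htb : Tendsto (fun ε : ℝ => M + ε) (𝓝[>] (0:ℝ)) (𝓝 M) := by
    have h1 : Tendsto (fun ε : ℝ => M + ε) (𝓝 (0:ℝ)) (𝓝 (M + 0)) :=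
      (continuous_const.add continuous_id).tendsto 0
    simpa using h1.mono_left nhdsWithin_le_nhds
  have hco : Filter.IsCoboundedUnder (· ≤ ·) (𝓝[>] (0:ℝ))
      (fun ε => opE E σ p (x + ε) (y + ε)) := by
    apply Filter.IsBoundedUnder.isCoboundedUnder_le
    apply isBoundedUnder_of_eventually_ge (a := (0:ℝ))
    filter_upwards [hδ] with ε hε
    obtain ⟨hxε, hyε⟩ := hmem ε hε
    exact (opE_mem01 hcl h0 hsub hp hxε hyε).1
  calc Filter.limsup (fun ε => opE E σ p (x + ε) (y + ε)) (𝓝[>] (0:ℝ))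
      ≤ Filter.limsup (fun ε : ℝ => M + ε) (𝓝[>] (0:ℝ)) :=
        Filter.limsup_le_limsup hev hco htb.isBoundedUnder_le
    _ = M := htb.limsup_eq

lemma ucF (hcl : IsClosed E) (h0 : (0:ℝ) ∈ E) (hsub : E ⊆ Set.Icc 0 1) :
    ∀ x ∈ Set.Ico (0:ℝ) 1, ∀ y ∈ Set.Ico (0:ℝ) 1, ∀ p ∈ Set.Ioo (0:ℝ) 1,
      Filter.limsup (fun ε => opE E σ p (x + ε) (y + ε)) (𝓝[>] (0:ℝ))
        ≤ opE E σ p x y := by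
  intro x hx y hy p hp
  have hx01 : x ∈ Set.Icc (0:ℝ) 1 := ⟨hx.1, hx.2.le⟩
  have hy01 : y ∈ Set.Icc (0:ℝ) 1 := ⟨hy.1, hy.2.le⟩
  obtain ⟨hs, hIcc, hb, hg⟩ := opE_spec hcl h0 hsub hp hx01 hy01
  by_cases hax : Racc E x
  · by_cases hxy : y ≤ x
    · rw [op_racc_left hcl h0 hsub hp hx01 hy01 hax hxy]
      exact uc_bound hcl h0 hsub hp hx hy (max_le le_rfl hxy)
    · push_neg at hxy
      by_cases hay : Racc E y
      · rw [op_racc_right hcl h0 hsub hp hx01 hy01 hay hxy.le]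
        exact uc_bound hcl h0 hsub hp hx hy (max_le hxy.le le_rfl)
      · -- Racc x, ¬Racc y, x < y : continuity at level bse y
        have hxE : x ∈ E := racc_mem hcl hax
        have hxb : x < bse E y :=
          lt_of_le_of_ne (le_bse hxE hx.1 hxy.le)
            (fun h => absurd (racc_bse_eq h0 hax hy.1 h.symm) (ne_of_gt hxy))
        have hmax0 : max (bse E x) (bse E y) = bse E y :=
          max_eq_right (le_of_lt (lt_of_le_of_lt (bse_le h0 hx.1) hxb))
        obtain ⟨δ2, hδ2, hb2⟩ := not_racc_bse hay
        have hgval : gval E σ (bse E y) y ∈ Sset E σ (bse E y) :=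
          gval_mem hcl h0 hsub (bse_mem hcl h0 hy.1) hy.1 hy.2.le rfl
        have hgc : ContinuousAt (fun ε : ℝ => p * 0 + (1 - p) * gval E σ (bse E y) (y + ε)) 0 := by
          apply ContinuousAt.add continuousAt_const
          apply ContinuousAt.mul continuousAt_const
          have hgy : ContinuousAt (gval E σ (bse E y)) (y + 0) := by
            rw [add_zero]
            exact gval_cont hcl (fun hne => lt_nxt_of_not_racc hcl h0 hy.1 rfl hay hne)
          exact hgy.comp (by fun_prop : ContinuousAt (fun ε : ℝ => y + ε) 0)
        have hg0 : (0:ℝ) ≤ p * 0 + (1 - p) * gval E σ (bse E y) (y + 0) := by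
          rw [add_zero]
          have := Sset_nonneg hgval
          nlinarith [hp.2]
        have hv : gphi E σ (bse E y) (p * 0 + (1 - p) * gval E σ (bse E y) (y + 0))
            = opE E σ p x y := by
          rw [add_zero, opE_eq hp x y, hmax0]
          have hu1 : uval E σ (bse E y) x = 0 :=
            uval_of_ne (ne_of_lt (lt_of_le_of_lt (bse_le h0 hx.1) hxb))
          have hu2 : uval E σ (bse E y) y = gval E σ (bse E y) y := by
            unfold uval; rw [if_pos rfl]
          rw [hu1, hu2]
        have hev : ∀ᶠ ε in 𝓝[>] (0:ℝ), opE E σ p (x + ε) (y + ε)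
            = gphi E σ (bse E y) (p * 0 + (1 - p) * gval E σ (bse E y) (y + ε)) := by
          filter_upwards [Ioo_mem_nhdsGT_of_mem
            (⟨le_rfl, lt_min hδ2 (by linarith)⟩ :
              (0:ℝ) ∈ Set.Ico (0:ℝ) (min δ2 (bse E y - x)))] with ε hε
          have he2 : bse E (y + ε) = bse E y :=
            hb2 ε hε.1 (lt_of_lt_of_le hε.2 (min_le_left _ _))
          have he1lt : bse E (x + ε) < bse E y := by
            have h1 : bse E (x + ε) ≤ x + ε := bse_le h0 (by linarith [hx.1, hε.1])
            have h2 := lt_of_lt_of_le hε.2 (min_le_right _ _)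
            linarith
          have hmaxε : max (bse E (x + ε)) (bse E (y + ε)) = bse E y := by
            rw [he2]; exact max_eq_right he1lt.le
          rw [opE_eq hp (x + ε) (y + ε), hmaxε]
          have hu1 : uval E σ (bse E y) (x + ε) = 0 := uval_of_ne (ne_of_lt he1lt)
          have hu2 : uval E σ (bse E y) (y + ε) = gval E σ (bse E y) (y + ε) := by
            unfold uval; rw [if_pos he2]
          rw [hu1, hu2]
        exact le_of_eq ((tendsto_gphi_path _ hgc hg0 hv hev).limsup_eq)
  · by_cases hay : Racc E y
    · by_cases hyx : x ≤ y
      · rw [op_racc_right hcl h0 hsub hp hx01 hy01 hay hyx]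
        exact uc_bound hcl h0 hsub hp hx hy (max_le hyx le_rfl)
      · push_neg at hyx
        -- Racc y, ¬Racc x, y < x : continuity at level bse x
        have hyE : y ∈ E := racc_mem hcl hay
        have hyb : y < bse E x :=
          lt_of_le_of_ne (le_bse hyE hy.1 hyx.le)
            (fun h => absurd (racc_bse_eq h0 hay hx.1 h.symm) (ne_of_gt hyx))
        have hmax0 : max (bse E x) (bse E y) = bse E x :=
          max_eq_left (le_of_lt (lt_of_le_of_lt (bse_le h0 hy.1) hyb))
        obtain ⟨δ1, hδ1, hb1⟩ := not_racc_bse hax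
        have hgval : gval E σ (bse E x) x ∈ Sset E σ (bse E x) :=
          gval_mem hcl h0 hsub (bse_mem hcl h0 hx.1) hx.1 hx.2.le rfl
        have hgc : ContinuousAt (fun ε : ℝ => p * gval E σ (bse E x) (x + ε) + (1 - p) * 0) 0 := by
          apply ContinuousAt.add
          · apply ContinuousAt.mul continuousAt_const
            have hgx : ContinuousAt (gval E σ (bse E x)) (x + 0) := by
              rw [add_zero]
              exact gval_cont hcl (fun hne => lt_nxt_of_not_racc hcl h0 hx.1 rfl hax hne)
            exact hgx.comp (by fun_prop : ContinuousAt (fun ε : ℝ => x + ε) 0)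
          · exact continuousAt_const
        have hg0 : (0:ℝ) ≤ p * gval E σ (bse E x) (x + 0) + (1 - p) * 0 := by
          rw [add_zero]
          have := Sset_nonneg hgval
          nlinarith [hp.1]
        have hv : gphi E σ (bse E x) (p * gval E σ (bse E x) (x + 0) + (1 - p) * 0)
            = opE E σ p x y := by
          rw [add_zero, opE_eq hp x y, hmax0]
          have hu2 : uval E σ (bse E x) y = 0 :=
            uval_of_ne (ne_of_lt (lt_of_le_of_lt (bse_le h0 hy.1) hyb))
          have hu1 : uval E σ (bse E x) x = gval E σ (bse E x) x := by
            unfold uval; rw [if_pos rfl]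
          rw [hu1, hu2]
        have hev : ∀ᶠ ε in 𝓝[>] (0:ℝ), opE E σ p (x + ε) (y + ε)
            = gphi E σ (bse E x) (p * gval E σ (bse E x) (x + ε) + (1 - p) * 0) := by
          filter_upwards [Ioo_mem_nhdsGT_of_mem
            (⟨le_rfl, lt_min hδ1 (by linarith)⟩ :
              (0:ℝ) ∈ Set.Ico (0:ℝ) (min δ1 (bse E x - y)))] with ε hε
          have he1 : bse E (x + ε) = bse E x :=
            hb1 ε hε.1 (lt_of_lt_of_le hε.2 (min_le_left _ _))
          have he2lt : bse E (y + ε) < bse E x := by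
            have h1 : bse E (y + ε) ≤ y + ε := bse_le h0 (by linarith [hy.1, hε.1])
            have h2 := lt_of_lt_of_le hε.2 (min_le_right _ _)
            linarith
          have hmaxε : max (bse E (x + ε)) (bse E (y + ε)) = bse E x := by
            rw [he1]; exact max_eq_left he2lt.le
          rw [opE_eq hp (x + ε) (y + ε), hmaxε]
          have hu2 : uval E σ (bse E x) (y + ε) = 0 := uval_of_ne (ne_of_lt he2lt)
          have hu1 : uval E σ (bse E x) (x + ε) = gval E σ (bse E x) (x + ε) := by
            unfold uval; rw [if_pos he1]
          rw [hu1, hu2]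
        exact le_of_eq ((tendsto_gphi_path _ hgc hg0 hv hev).limsup_eq)
    · -- neither Racc : full continuity
      obtain ⟨δ1, hδ1, hb1⟩ := not_racc_bse hax
      obtain ⟨δ2, hδ2, hb2⟩ := not_racc_bse hay
      have hgc : ContinuousAt (fun ε : ℝ =>
          p * (if bse E x = max (bse E x) (bse E y)
                then gval E σ (max (bse E x) (bse E y)) (x + ε) else 0)
          + (1 - p) * (if bse E y = max (bse E x) (bse E y)
                then gval E σ (max (bse E x) (bse E y)) (y + ε) else 0)) 0 := by
        apply ContinuousAt.add
        · apply ContinuousAt.mul continuousAt_const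
          by_cases h : bse E x = max (bse E x) (bse E y)
          · simp only [if_pos h]
            have hgx : ContinuousAt (gval E σ (max (bse E x) (bse E y))) (x + 0) := by
              rw [add_zero]
              exact gval_cont hcl (fun hne => lt_nxt_of_not_racc hcl h0 hx.1 h hax hne)
            exact hgx.comp (by fun_prop : ContinuousAt (fun ε : ℝ => x + ε) 0)
          · simp only [if_neg h]
            exact continuousAt_const
        · apply ContinuousAt.mul continuousAt_const
          by_cases h : bse E y = max (bse E x) (bse E y)
          · simp only [if_pos h]
            have hgy : ContinuousAt (gval E σ (max (bse E x) (bse E y))) (y + 0) := by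
              rw [add_zero]
              exact gval_cont hcl (fun hne => lt_nxt_of_not_racc hcl h0 hy.1 h hay hne)
            exact hgy.comp (by fun_prop : ContinuousAt (fun ε : ℝ => y + ε) 0)
          · simp only [if_neg h]
            exact continuousAt_const
      have hg0eq : (p * (if bse E x = max (bse E x) (bse E y)
                then gval E σ (max (bse E x) (bse E y)) (x + 0) else 0)
          + (1 - p) * (if bse E y = max (bse E x) (bse E y)
                then gval E σ (max (bse E x) (bse E y)) (y + 0) else 0))
          = p * uval E σ (max (bse E x) (bse E y)) x
            + (1 - p) * uval E σ (max (bse E x) (bse E y)) y := by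
        unfold uval
        simp only [add_zero]
      have hg0 : (0:ℝ) ≤ (p * (if bse E x = max (bse E x) (bse E y)
                then gval E σ (max (bse E x) (bse E y)) (x + 0) else 0)
          + (1 - p) * (if bse E y = max (bse E x) (bse E y)
                then gval E σ (max (bse E x) (bse E y)) (y + 0) else 0)) := by
        rw [hg0eq]
        exact Sset_nonneg hs
      have hv : gphi E σ (max (bse E x) (bse E y))
          (p * (if bse E x = max (bse E x) (bse E y)
                then gval E σ (max (bse E x) (bse E y)) (x + 0) else 0)
          + (1 - p) * (if bse E y = max (bse E x) (bse E y)
                then gval E σ (max (bse E x) (bse E y)) (y + 0) else 0))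
          = opE E σ p x y := by
        rw [hg0eq, opE_eq hp x y]
      have hev : ∀ᶠ ε in 𝓝[>] (0:ℝ), opE E σ p (x + ε) (y + ε)
          = gphi E σ (max (bse E x) (bse E y))
              (p * (if bse E x = max (bse E x) (bse E y)
                    then gval E σ (max (bse E x) (bse E y)) (x + ε) else 0)
              + (1 - p) * (if bse E y = max (bse E x) (bse E y)
                    then gval E σ (max (bse E x) (bse E y)) (y + ε) else 0)) := by
        filter_upwards [Ioo_mem_nhdsGT_of_mem
          (⟨le_rfl, lt_min hδ1 hδ2⟩ : (0:ℝ) ∈ Set.Ico (0:ℝ) (min δ1 δ2))] with ε hε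
        have he1 : bse E (x + ε) = bse E x :=
          hb1 ε hε.1 (lt_of_lt_of_le hε.2 (min_le_left _ _))
        have he2 : bse E (y + ε) = bse E y :=
          hb2 ε hε.1 (lt_of_lt_of_le hε.2 (min_le_right _ _))
        rw [opE_eq hp (x + ε) (y + ε), he1, he2]
        unfold uval
        rw [he1, he2]
      exact le_of_eq ((tendsto_gphi_path _ hgc hg0 hv hev).limsup_eq)

end Lemmas

/-- Theorem 4.1: let `E` be a closed subset of `[0,1]` with `0 ∈ E`, let
`Δ = {(a,b) : a, b ∈ E, a < b, (a,b) ∩ E = ∅}`, and let `σ` assign to each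
`(a,b) ∈ Δ` an element of `{1, ∞}`.  Then there is a convex algebra
`⟨[0,1], ⊕_p⟩` satisfying (MO), (UC), (LC) with `E^⊕ = E` (hence `Δ^⊕ = Δ`)
and, for each `(a,b) ∈ Δ`, `⟨[a,b), ⊕_p⟩ ≅ ⟨[0, σ_{a,b}), +_p⟩`
(i.e. `τ^⊕_{a,b} = σ_{a,b}`). -/
theorem stmt_18 (E : Set ℝ) (hEcl : IsClosed E) (hEsub : E ⊆ Set.Icc (0:ℝ) 1)
    (hE0 : (0:ℝ) ∈ E) (σ : ℝ → ℝ → ENNReal)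
    (hσ : ∀ a b, (a ∈ E ∧ b ∈ E ∧ a < b ∧ Set.Ioo a b ∩ E = ∅) →
      σ a b ∈ ({1, ⊤} : Set ENNReal)) :
    ∃ A : UCA, A.MO ∧ A.UC ∧ A.LC ∧ A.E = E ∧
      ∀ a b, (a ∈ E ∧ b ∈ E ∧ a < b ∧ Set.Ioo a b ∩ E = ∅) →
        ∃ Φ : ℝ → ℝ, A.IsTauIso a b (σ a b) Φ := by
  refine ⟨{ op := opE E σ, mem := memF hEcl hE0 hEsub, idem := idemF hEcl hE0,
            comm := commF, assoc := assocF hEcl hE0 hEsub,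
            proj1 := proj1F, proj0 := proj0F },
          moF hEcl hE0 hEsub, ucF hEcl hE0 hEsub, lcF hEcl hE0 hEsub, ?_, ?_⟩
  · ext yy
    constructor
    · rintro ⟨hy1, hy2⟩
      by_contra hne
      exact not_eats_of_not_mem hEcl hE0 hEsub hy1 hne
        (hy2 (1/2) ⟨by norm_num, by norm_num⟩)
    · intro hyE
      exact ⟨hEsub hyE, eats_of_mem hEcl hE0 hEsub hyE⟩
  · intro a b hab
    obtain ⟨haE, hbE, hlt, hgap⟩ := hab
    obtain ⟨hbij, hop⟩ := isoF hEcl hE0 hEsub (hσ a b ⟨haE, hbE, hlt, hgap⟩) haE hbE hlt hgap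
    exact ⟨gphi E σ a, hbij, fun p hp s hs t ht => hop p hp s hs t ht⟩
end
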